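/- Let δ ∈ (0,1] with δ = 2^{-N}, t ∈ [1,2). There exists a finite family P of dyadic δ-squares contained in [0,1]², with |P| ≥ c·δ^{-t} for an absolute constant c > 0, such that P is a (δ,t)-set with absolute constant C (i.e. |{p ∈ P : p ∩ B(x,r) ≠ ∅}| ≤ C(r/δ)^t for all x ∈ ℝ² and δ ≤ r ≤ 1), and for every θ ∈ S¹ there exist an interval I_θ ⊂ ℝ with |I_θ| ≤ Cδ and a subfamily S(θ) ⊂ P with |S(θ)| ≥ c·δ^{-t/2} satisfying πθ(∪S(θ)) ⊂ I_θ. -/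

import Mathlib

open MeasureTheory Metric Set Filter

noncomputable def perp (θ : EuclideanSpace ℝ (Fin 2)) : EuclideanSpace ℝ (Fin 2) :=
  (WithLp.equiv 2 (Fin 2 → ℝ)).symm ![-θ 1, θ 0]

/-- Orthogonal projection onto span(θ^⊥), viewed as a map to ℝ. -/
noncomputable def proj (θ x : EuclideanSpace ℝ (Fin 2)) : ℝ := inner ℝ x (perp θ)

/-- The closed dyadic δ-square [jδ,(j+1)δ] × [kδ,(k+1)δ]. -/
def dsq (δ : ℝ) (j k : ℤ) : Set (EuclideanSpace ℝ (Fin 2)) :=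
  {x | x 0 ∈ Set.Icc (j * δ) ((j + 1) * δ) ∧ x 1 ∈ Set.Icc (k * δ) ((k + 1) * δ)}

/-- The unit square [0,1]². -/
def unitSq : Set (EuclideanSpace ℝ (Fin 2)) :=
  {x | x 0 ∈ Set.Icc (0:ℝ) 1 ∧ x 1 ∈ Set.Icc (0:ℝ) 1}

namespace S4

lemma proj_eq (θ z : EuclideanSpace ℝ (Fin 2)) :
    proj θ z = z 1 * θ 0 - z 0 * θ 1 := by
  simp only [proj, perp, PiLp.inner_apply, RCLike.inner_apply, starRingEnd_apply]
  rw [Fin.sum_univ_two]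
  simp
  ring

lemma abs_coord_le_dist (z x : EuclideanSpace ℝ (Fin 2)) (i : Fin 2) :
    |z i - x i| ≤ dist z x := by
  rw [EuclideanSpace.dist_eq]
  have h1 : |z i - x i| = Real.sqrt (dist (z i) (x i) ^ 2) := by
    rw [Real.sqrt_sq dist_nonneg, Real.dist_eq]
  rw [h1]
  apply Real.sqrt_le_sqrt
  exact Finset.single_le_sum (f := fun j => dist (z j) (x j) ^ 2)
    (fun j _ => sq_nonneg _) (Finset.mem_univ i)

/-- basic affine counting lemma -/
lemma count_affine (s : Finset ℤ) (γ c A B : ℝ) (hγ : 0 < γ) (hAB : A ≤ B)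
    (h : ∀ j ∈ s, A ≤ (j:ℝ) * γ + c ∧ (j:ℝ) * γ + c ≤ B) :
    (s.card : ℝ) ≤ (B - A) / γ + 1 := by
  have hsub : s ⊆ Finset.Icc ⌈(A - c)/γ⌉ ⌊(B - c)/γ⌋ := by
    intro j hj
    obtain ⟨h1, h2⟩ := h j hj
    rw [Finset.mem_Icc]
    constructor
    · rw [Int.ceil_le]
      rw [div_le_iff₀ hγ]
      linarith
    · rw [Int.le_floor]
      rw [le_div_iff₀ hγ]
      linarith
  have hcard := Finset.card_le_card hsub
  have h2 : ((Finset.Icc ⌈(A - c)/γ⌉ ⌊(B - c)/γ⌋).card : ℝ) ≤ (B - A)/γ + 1 := by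
    rw [Int.card_Icc]
    have hfc : (((⌊(B - c)/γ⌋ + 1 - ⌈(A - c)/γ⌉).toNat : ℤ) : ℝ) ≤ (B - A)/γ + 1 := by
      rcases le_or_gt (⌈(A - c)/γ⌉) (⌊(B - c)/γ⌋ + 1) with hle | hlt
      · rw [Int.toNat_of_nonneg (by omega)]
        push_cast
        have l1 : ((⌊(B - c)/γ⌋ : ℝ)) ≤ (B - c)/γ := Int.floor_le _
        have l2 : (A - c)/γ ≤ ((⌈(A - c)/γ⌉ : ℝ)) := Int.le_ceil _
        have : (B - c)/γ - (A - c)/γ = (B - A)/γ := by ring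
        linarith
      · rw [Int.toNat_of_nonpos (by omega)]
        have hAB2 : (0:ℝ) ≤ (B - A)/γ := div_nonneg (by linarith) hγ.le
        norm_num; linarith
    exact_mod_cast hfc
  calc (s.card : ℝ) ≤ _ := by exact_mod_cast hcard
    _ ≤ _ := h2


noncomputable def del (N : ℕ) : ℝ := ((2:ℝ)^N)⁻¹

lemma del_pos (N : ℕ) : 0 < del N := by unfold del; positivity

def Qz (m N : ℕ) : ℤ := 2^(N - m)

noncomputable def eta (m N : ℕ) : ℝ := ((8:ℝ)*((2:ℝ)^(2*m - N)+1))⁻¹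

lemma eta_pos (m N : ℕ) : 0 < eta m N := by unfold eta; positivity

noncomputable def Yf (m N : ℕ) (i ℓ : ℤ) : ℝ :=
  1/2 + ((i / Qz m N : ℤ):ℝ) * eta m N + ((i:ℝ) * ((2:ℝ)^m)⁻¹) * ((ℓ:ℝ) * del N)

noncomputable def f2 (m N : ℕ) (p : ℤ×ℤ) : ℤ×ℤ :=
  ((p.1 % Qz m N) * 2^m + p.2, ⌊Yf m N p.1 p.2 / del N⌋)

noncomputable def D2 (m : ℕ) : Finset (ℤ×ℤ) := Finset.Icc (-(2^m:ℤ)) (2^m) ×ˢ Finset.Icc 0 (2^m - 1)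

noncomputable def P2 (m N : ℕ) : Finset (ℤ×ℤ) := (D2 m).image (f2 m N)

noncomputable def P1 (m N : ℕ) : Finset (ℤ×ℤ) :=
  (Finset.Icc (0:ℤ) (2^m - 1) ×ˢ Finset.Icc (0:ℤ) (2^m - 1)).image
    (fun p => (p.1 * 2^(N-m), p.2 * 2^(N-m)))

noncomputable def PP (m N : ℕ) : Finset (ℤ×ℤ) :=
  P1 m N ∪ P2 m N ∪ (P2 m N).image Prod.swap

noncomputable def Pfull (N : ℕ) : Finset (ℤ×ℤ) :=
  Finset.Icc (0:ℤ) (2^N - 1) ×ˢ Finset.Icc (0:ℤ) (2^N - 1)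


section main
variable {m N : ℕ}

lemma pow_sub_mul (h : m ≤ N) : (2:ℝ)^(N-m) * (2:ℝ)^m = (2:ℝ)^N := by
  rw [← pow_add]; congr 1; omega

lemma QdelSigma (h : m ≤ N) : (2:ℝ)^(N-m) * del N = ((2:ℝ)^m)⁻¹ := by
  unfold del
  rw [← pow_sub_mul h]; field_simp

lemma JQK (h2 : N ≤ 2*m) (h1 : m ≤ N) : ((2:ℝ)^(2*m-N)) * (2:ℝ)^(N-m) = (2:ℝ)^m := by
  rw [← pow_add]; congr 1; omega

lemma JQKz (h2 : N ≤ 2*m) (h1 : m ≤ N) : ((2:ℤ)^(2*m-N)) * (2:ℤ)^(N-m) = 2^m := by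
  rw [← pow_add]; congr 1; omega

lemma J_ge_one : (1:ℝ) ≤ (2:ℝ)^(2*m-N) := one_le_pow₀ (by norm_num)

lemma sigma_le_eta (h4 : m + 4 ≤ N) (h2 : N ≤ 2*m) : ((2:ℝ)^m)⁻¹ ≤ eta m N := by
  unfold eta
  apply inv_anti₀ (by positivity)
  have h16 : 8*((2:ℝ)^(2*m - N)+1) ≤ (2:ℝ)^(2*m-N+4) := by
    rw [pow_add]
    have := @J_ge_one m N
    norm_num
    nlinarith
  refine h16.trans ?_
  apply pow_le_pow_right₀ (by norm_num) (by omega)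

lemma inv_eta_le : (eta m N)⁻¹ ≤ 16 * (2:ℝ)^(2*m-N) := by
  unfold eta
  rw [inv_inv]
  nlinarith [@J_ge_one m N]

lemma P1_count (hmn : m ≤ N) (x₀ x₁ r : ℝ) (hr : 0 ≤ r) :
    (((P1 m N).filter (fun q =>
        |(q.1:ℝ)*del N - x₀| ≤ 2*r ∧ |(q.2:ℝ)*del N - x₁| ≤ 2*r)).card : ℝ)
      ≤ (4*r*(2:ℝ)^m + 1)^2 := by
  classical
  unfold P1
  rw [Finset.filter_image]
  refine le_trans (Nat.cast_le.mpr Finset.card_image_le) ?_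
  have hsub : ((Finset.Icc (0:ℤ) (2^m - 1) ×ˢ Finset.Icc (0:ℤ) (2^m - 1)).filter
      (fun p => |((((fun p : ℤ×ℤ => (p.1 * 2^(N-m), p.2 * 2^(N-m))) p).1 : ℤ):ℝ)*del N - x₀| ≤ 2*r ∧
        |((((fun p : ℤ×ℤ => (p.1 * 2^(N-m), p.2 * 2^(N-m))) p).2 : ℤ):ℝ)*del N - x₁| ≤ 2*r))
      ⊆ ((Finset.Icc (0:ℤ) (2^m - 1)).filter (fun a : ℤ => |(a:ℝ) * ((2:ℝ)^m)⁻¹ - x₀| ≤ 2*r)) ×ˢ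
        ((Finset.Icc (0:ℤ) (2^m - 1)).filter (fun b : ℤ => |(b:ℝ) * ((2:ℝ)^m)⁻¹ - x₁| ≤ 2*r)) := by
    intro p hp
    rw [Finset.mem_filter, Finset.mem_product] at hp
    obtain ⟨⟨hp1, hp2⟩, hc1, hc2⟩ := hp
    have key : ∀ a : ℤ, ((a * 2^(N-m) : ℤ):ℝ) * del N = (a:ℝ) * ((2:ℝ)^m)⁻¹ := by
      intro a
      push_cast
      rw [mul_assoc, QdelSigma hmn]
    rw [Finset.mem_product, Finset.mem_filter, Finset.mem_filter]
    refine ⟨⟨hp1, ?_⟩, ⟨hp2, ?_⟩⟩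
    · rw [← key]; exact hc1
    · rw [← key]; exact hc2
  refine le_trans (Nat.cast_le.mpr (Finset.card_le_card hsub)) ?_
  rw [Finset.card_product]
  push_cast
  have hb : ∀ x : ℝ, (((Finset.Icc (0:ℤ) (2^m - 1)).filter
      (fun a : ℤ => |(a:ℝ) * ((2:ℝ)^m)⁻¹ - x| ≤ 2*r)).card : ℝ) ≤ 4*r*(2:ℝ)^m + 1 := by
    intro x
    have := count_affine ((Finset.Icc (0:ℤ) (2^m - 1)).filter
        (fun a : ℤ => |(a:ℝ) * ((2:ℝ)^m)⁻¹ - x| ≤ 2*r)) (((2:ℝ)^m)⁻¹) 0 (x - 2*r) (x + 2*r)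
        (by positivity) (by linarith) ?_
    · refine this.trans ?_
      rw [div_eq_mul_inv, inv_inv]
      ring_nf
      linarith
    · intro j hj
      rw [Finset.mem_filter] at hj
      have := hj.2
      rw [abs_le] at this
      constructor <;> linarith [this.1, this.2]
  have h1 := hb x₀
  have h2 := hb x₁
  have hpos : (0:ℝ) ≤ 4*r*(2:ℝ)^m + 1 := by positivity
  rw [sq]
  exact mul_le_mul h1 h2 (Nat.cast_nonneg _) hpos

lemma card_le_mul_of_fibers {α β : Type*} [DecidableEq α] [DecidableEq β] (E : Finset α) (g : α → β) (T : Finset β)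
    (hT : ∀ x ∈ E, g x ∈ T) (B : ℝ) (hB : ∀ b ∈ T, ((E.filter (fun x => g x = b)).card : ℝ) ≤ B)
    (TB : ℝ) (hTB : (T.card : ℝ) ≤ TB) (hB0 : 0 ≤ B) :
    (E.card : ℝ) ≤ TB * B := by
  rw [Finset.card_eq_sum_card_fiberwise hT]
  push_cast
  calc (∑ b ∈ T, ((E.filter (fun x => g x = b)).card : ℝ))
      ≤ ∑ b ∈ T, B := Finset.sum_le_sum hB
    _ = (T.card : ℝ) * B := by rw [Finset.sum_const]; simp [mul_comm]
    _ ≤ TB * B := by apply mul_le_mul_of_nonneg_right hTB hB0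

lemma LId (h : m ≤ N) : (2:ℝ)^m * del N = ((2:ℝ)^(N-m))⁻¹ := by
  have h2 : (2:ℝ)^m * (2:ℝ)^(N-m) = (2:ℝ)^N := by rw [← pow_add]; congr 1; omega
  unfold del
  rw [← h2]
  have : ((2:ℝ)^(N-m)) ≠ 0 := by positivity
  field_simp

lemma div_del (x : ℝ) : x / del N = x * (2:ℝ)^N := by
  unfold del; field_simp

lemma P2_count (hm2 : N ≤ 2*m) (hm4 : m + 4 ≤ N) (x₀ x₁ r : ℝ) (hr : del N ≤ r) :
    (((P2 m N).filter (fun q =>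
        |(q.1:ℝ)*del N - x₀| ≤ 2*r ∧ |(q.2:ℝ)*del N - x₁| ≤ 2*r)).card : ℝ)
      ≤ (4*r*(2:ℝ)^(N-m) + 3) * (min (4*r*(2:ℝ)^N + 1) ((2:ℝ)^m)) * (96*(2:ℝ)^(2*m-N)*r + 1) := by
  classical
  have hmn : m ≤ N := by omega
  have hδ : 0 < del N := del_pos N
  have hrpos : 0 < r := lt_of_lt_of_le hδ hr
  set δ := del N with hδdef
  set Qi : ℤ := Qz m N with hQdef
  have hQpos : (0:ℤ) < Qi := by rw [hQdef]; unfold Qz; positivity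
  set η : ℝ := eta m N with hηdef
  have hηpos : 0 < η := eta_pos m N
  -- image to domain
  unfold P2
  rw [Finset.filter_image]
  refine le_trans (Nat.cast_le.mpr Finset.card_image_le) ?_
  set s : Finset (ℤ×ℤ) := (D2 m).filter
      (fun p => |(((f2 m N p).1 : ℤ):ℝ)*δ - x₀| ≤ 2*r ∧ |(((f2 m N p).2 : ℤ):ℝ)*δ - x₁| ≤ 2*r)
      with hsdef
  -- reindex
  set e : ℤ×ℤ → ℤ×ℤ×ℤ := fun p => (p.1 % Qi, p.1 / Qi, p.2) with hedef
  have hinj : Set.InjOn e ↑s := by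
    intro p _ p' _ hpp
    have h1 : p.1 % Qi = p'.1 % Qi := congrArg (·.1) hpp
    have h2 : p.1 / Qi = p'.1 / Qi := congrArg (·.2.1) hpp
    have h3 : p.2 = p'.2 := congrArg (·.2.2) hpp
    have e1 := Int.mul_ediv_add_emod p.1 Qi
    have e2 := Int.mul_ediv_add_emod p'.1 Qi
    have hp1 : p.1 = p'.1 := by
      calc p.1 = Qi * (p.1 / Qi) + p.1 % Qi := e1.symm
        _ = Qi * (p'.1 / Qi) + p'.1 % Qi := by rw [h1, h2]
        _ = p'.1 := e2
    exact Prod.ext hp1 h3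
  rw [← Finset.card_image_of_injOn hinj]
  set E : Finset (ℤ×ℤ×ℤ) := s.image e with hEdef
  -- basic membership extraction
  have hmem : ∀ z ∈ E, ∃ i ℓ : ℤ, (i,ℓ) ∈ s ∧ z = (i % Qi, i / Qi, ℓ) := by
    intro z hz
    rw [hEdef, Finset.mem_image] at hz
    obtain ⟨p, hp, hpz⟩ := hz
    exact ⟨p.1, p.2, by simpa using hp, hpz.symm⟩
  -- unfold s-membership into usable facts
  have hfact : ∀ i ℓ : ℤ, (i,ℓ) ∈ s →
      (-(2^m:ℤ) ≤ i ∧ i ≤ 2^m ∧ 0 ≤ ℓ ∧ ℓ ≤ 2^m - 1 ∧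
       |((i % Qi : ℤ):ℝ)*((2:ℝ)^m * δ) + (ℓ:ℝ)*δ - x₀| ≤ 2*r ∧
       |Yf m N i ℓ - x₁| ≤ 3*r) := by
    intro i ℓ hs
    rw [hsdef, Finset.mem_filter] at hs
    obtain ⟨hD, hc1, hc2⟩ := hs
    rw [D2, Finset.mem_product, Finset.mem_Icc, Finset.mem_Icc] at hD
    refine ⟨hD.1.1, hD.1.2, hD.2.1, hD.2.2, ?_, ?_⟩
    · have : (((i % Qi) * 2^m + ℓ : ℤ):ℝ) * δ
          = ((i % Qi : ℤ):ℝ)*((2:ℝ)^m * δ) + (ℓ:ℝ)*δ := by push_cast; ring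
      have hc1' := hc1
      simp only [f2] at hc1'
      rw [this] at hc1'
      exact hc1'
    · have hc2' := hc2
      simp only [f2] at hc2'
      have hfl : |(⌊Yf m N i ℓ / δ⌋ : ℝ) * δ - Yf m N i ℓ| ≤ δ := by
        rw [abs_le]
        have h1 : (⌊Yf m N i ℓ / δ⌋ : ℝ) ≤ Yf m N i ℓ / δ := Int.floor_le _
        have h2 : Yf m N i ℓ / δ - 1 ≤ (⌊Yf m N i ℓ / δ⌋ : ℝ) := by
          have := Int.lt_floor_add_one (Yf m N i ℓ / δ); linarith
      
        constructor
        · nlinarith [mul_le_mul_of_nonneg_right h2 hδ.le, (div_mul_cancel₀ (Yf m N i ℓ) (ne_of_gt hδ))]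
        · nlinarith [mul_le_mul_of_nonneg_right h1 hδ.le, (div_mul_cancel₀ (Yf m N i ℓ) (ne_of_gt hδ))]
      calc |Yf m N i ℓ - x₁|
          ≤ |Yf m N i ℓ - (⌊Yf m N i ℓ / δ⌋ : ℝ) * δ| + |(⌊Yf m N i ℓ / δ⌋ : ℝ) * δ - x₁| :=
            abs_sub_le _ _ _
        _ = |(⌊Yf m N i ℓ / δ⌋ : ℝ) * δ - Yf m N i ℓ| + |(⌊Yf m N i ℓ / δ⌋ : ℝ) * δ - x₁| := by
            rw [abs_sub_comm]
        _ ≤ δ + 2*r := add_le_add hfl hc2'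
        _ ≤ 3*r := by linarith
  -- outer fibering over a
  have hL : (0:ℝ) < (2:ℝ)^m * δ := by positivity
  set T : Finset ℤ := E.image (·.1) with hTdef
  have hTmem : ∀ z ∈ E, z.1 ∈ T := fun z hz => Finset.mem_image_of_mem _ hz
  have hTwit : ∀ a ∈ T, ∃ i ℓ : ℤ, (i,ℓ) ∈ s ∧ a = i % Qi := by
    intro a ha
    rw [hTdef, Finset.mem_image] at ha
    obtain ⟨z, hz, hza⟩ := ha
    obtain ⟨i, ℓ, his, hze⟩ := hmem z hz
    exact ⟨i, ℓ, his, by rw [← hza, hze]⟩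
  have hTcard : (T.card : ℝ) ≤ 4*r*(2:ℝ)^(N-m) + 3 := by
    have hca := count_affine T ((2:ℝ)^m * δ) 0 (x₀ - 2*r - (2:ℝ)^m*δ) (x₀ + 2*r) hL
      (by linarith) ?_
    · refine hca.trans ?_
      have hexp : (x₀ + 2*r - (x₀ - 2*r - (2:ℝ)^m*δ)) = 4*r + (2:ℝ)^m*δ := by ring
      have hLinv : ((2:ℝ)^m*δ)⁻¹ = (2:ℝ)^(N-m) := by
        rw [hδdef, LId hmn, inv_inv]
      rw [hexp, add_div, div_self (ne_of_gt hL), div_eq_mul_inv, hLinv]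
      linarith
    · intro a ha
      obtain ⟨i, ℓ, his, hae⟩ := hTwit a ha
      obtain ⟨_, _, hl0, hl1, hx, _⟩ := hfact i ℓ his
      rw [abs_le] at hx
      have hld0 : (0:ℝ) ≤ (ℓ:ℝ)*δ := by
        apply mul_nonneg _ hδ.le
        exact_mod_cast hl0
      have hld1 : (ℓ:ℝ)*δ ≤ (2:ℝ)^m * δ := by
        apply mul_le_mul_of_nonneg_right _ hδ.le
        have : (ℓ:ℝ) ≤ (2:ℝ)^m - 1 := by
          have : (ℓ:ℝ) ≤ ((2^m - 1 : ℤ):ℝ) := by exact_mod_cast hl1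
          push_cast at this
          linarith
        linarith
      subst hae
      constructor <;> nlinarith [hx.1, hx.2]
  have hBin0 : (0:ℝ) ≤ (min (4*r*(2:ℝ)^N + 1) ((2:ℝ)^m)) * (96*(2:ℝ)^(2*m-N)*r + 1) := by
    apply mul_nonneg
    · exact le_min (by positivity) (by positivity)
    · positivity
  rw [show (4*r*(2:ℝ)^(N-m) + 3) * (min (4*r*(2:ℝ)^N + 1) ((2:ℝ)^m)) * (96*(2:ℝ)^(2*m-N)*r + 1)
      = (4*r*(2:ℝ)^(N-m) + 3) * ((min (4*r*(2:ℝ)^N + 1) ((2:ℝ)^m)) * (96*(2:ℝ)^(2*m-N)*r + 1))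
      from mul_assoc _ _ _]
  apply card_le_mul_of_fibers E (·.1) T hTmem _ ?_ _ hTcard hBin0
  -- fiber over a: bound by min * (96Jr+1)
  intro a ha
  set Ea := E.filter (fun z => z.1 = a) with hEadef
  set T2 : Finset ℤ := Ea.image (·.2.2) with hT2def
  have hT2mem : ∀ z ∈ Ea, z.2.2 ∈ T2 := fun z hz => Finset.mem_image_of_mem _ hz
  have hT2wit : ∀ ℓ ∈ T2, ∃ i : ℤ, (i,ℓ) ∈ s ∧ a = i % Qi := by
    intro ℓ hℓ
    rw [hT2def, Finset.mem_image] at hℓ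
    obtain ⟨z, hz, hzℓ⟩ := hℓ
    rw [hEadef, Finset.mem_filter] at hz
    obtain ⟨hzE, hza⟩ := hz
    obtain ⟨i, ℓ', his, hze⟩ := hmem z hzE
    refine ⟨i, ?_, ?_⟩
    · have : ℓ' = ℓ := by rw [← hzℓ, hze]
      rwa [← this]
    · rw [← hza, hze]
  have hT2card : (T2.card : ℝ) ≤ min (4*r*(2:ℝ)^N + 1) ((2:ℝ)^m) := by
    refine le_min ?_ ?_
    · have hca := count_affine T2 δ ((a:ℝ)*((2:ℝ)^m * δ) - x₀) (-(2*r)) (2*r) hδ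
        (by linarith) ?_
      · refine hca.trans ?_
        rw [show (2*r - -(2*r)) = 4*r by ring, div_del]
      · intro ℓ hℓ
        obtain ⟨i, his, hae⟩ := hT2wit ℓ hℓ
        obtain ⟨_, _, _, _, hx, _⟩ := hfact i ℓ his
        rw [abs_le] at hx
        subst hae
        constructor <;> [linarith [hx.1]; linarith [hx.2]]
    · have hsub2 : T2 ⊆ Finset.Icc (0:ℤ) (2^m - 1) := by
        intro ℓ hℓ
        obtain ⟨i, his, _⟩ := hT2wit ℓ hℓ
        obtain ⟨_, _, h0, h1, _, _⟩ := hfact i ℓ his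
        rw [Finset.mem_Icc]; exact ⟨h0, h1⟩
      refine le_trans (Nat.cast_le.mpr (Finset.card_le_card hsub2)) ?_
      rw [Int.card_Icc]
      have h2m : ((2:ℤ)^m - 1 + 1 - 0) = ((2^m : ℕ) : ℤ) := by push_cast; ring
      rw [h2m, Int.toNat_natCast]
      push_cast
      exact le_refl _
  apply card_le_mul_of_fibers Ea (·.2.2) T2 hT2mem _ ?_ _ hT2card (by positivity)
  -- innermost fiber: j-count
  intro ℓ hℓ
  have hℓ0 : (0:ℤ) ≤ ℓ := by
    obtain ⟨i, his, _⟩ := hT2wit ℓ hℓ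
    exact (hfact i ℓ his).2.2.1
  set F := Ea.filter (fun z => z.2.2 = ℓ) with hFdef
  have hinjF : Set.InjOn (fun z : ℤ×ℤ×ℤ => z.2.1) ↑F := by
    intro z hz z' hz' hzz
    simp only [Finset.coe_filter, Set.mem_setOf_eq, hFdef, hEadef, Finset.mem_filter] at hz hz'
    obtain ⟨⟨_, hza⟩, hzℓ⟩ := hz
    obtain ⟨⟨_, hza'⟩, hzℓ'⟩ := hz'
    have : z.2 = z'.2 := Prod.ext hzz (by rw [hzℓ, hzℓ'])
    exact Prod.ext (by rw [hza, hza']) this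
  rw [← Finset.card_image_of_injOn hinjF]
  set γ : ℝ := η + (Qi:ℝ) * ((2:ℝ)^m)⁻¹ * ((ℓ:ℝ) * δ) with hγdef
  have hγlow : η ≤ γ := by
    have : (0:ℝ) ≤ (Qi:ℝ) * ((2:ℝ)^m)⁻¹ * ((ℓ:ℝ) * δ) := by
      apply mul_nonneg (mul_nonneg (by exact_mod_cast hQpos.le) (by positivity))
      apply mul_nonneg (by exact_mod_cast hℓ0) hδ.le
    rw [hγdef]
    linarith
  have hγpos : 0 < γ := lt_of_lt_of_le hηpos hγlow
  have hca := count_affine (F.image (fun z : ℤ×ℤ×ℤ => z.2.1)) γ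
      (1/2 + (a:ℝ)*((2:ℝ)^m)⁻¹*((ℓ:ℝ)*δ)) (x₁ - 3*r) (x₁ + 3*r) hγpos (by linarith) ?_
  · refine hca.trans ?_
    rw [show (x₁ + 3*r - (x₁ - 3*r)) = 6*r by ring]
    have h1 : 6*r/γ ≤ 6*r/η := by
      apply div_le_div_of_nonneg_left (by linarith) hηpos hγlow
    have h2 : 6*r/η ≤ 6*r*(16*(2:ℝ)^(2*m-N)) := by
      rw [div_eq_mul_inv]
      apply mul_le_mul_of_nonneg_left (inv_eta_le) (by linarith)
    have : 6*r*(16*(2:ℝ)^(2*m-N)) = 96*(2:ℝ)^(2*m-N)*r := by ring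
    linarith
  · intro j hj
    rw [Finset.mem_image] at hj
    obtain ⟨z, hzF, hzj⟩ := hj
    rw [hFdef, Finset.mem_filter] at hzF
    obtain ⟨hzEa, hzℓ⟩ := hzF
    rw [hEadef, Finset.mem_filter] at hzEa
    obtain ⟨hzE, hza⟩ := hzEa
    obtain ⟨i, ℓ', his, hze⟩ := hmem z hzE
    have hℓ' : ℓ' = ℓ := by rw [← hzℓ, hze]
    have hia : i % Qi = a := by rw [← hza, hze]
    have hij : i / Qi = j := by rw [← hzj, hze]
    obtain ⟨_, _, _, _, _, hY⟩ := hfact i ℓ' his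
    rw [hℓ'] at hY
    have hYval : Yf m N i ℓ = (j:ℝ) * γ + (1/2 + (a:ℝ)*((2:ℝ)^m)⁻¹*((ℓ:ℝ)*δ)) := by
      unfold Yf
      rw [hij, hγdef]
      have hidecomp : (i:ℝ) = (Qi:ℝ) * (j:ℝ) + (a:ℝ) := by
        have := Int.mul_ediv_add_emod i Qi
        rw [hij, hia] at this
        exact_mod_cast this.symm
      rw [hidecomp]
      have : δ = del N := hδdef
      rw [← this]
      ring
    rw [hYval] at hY
    rw [abs_le] at hY
    constructor <;> [linarith [hY.1]; linarith [hY.2]]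

lemma ncard_le_filter (P : Finset (ℤ×ℤ)) {δ r : ℝ} (hδ : 0 < δ) (hδr : δ ≤ r)
    (x : EuclideanSpace ℝ (Fin 2)) :
    ({q : ℤ×ℤ | q ∈ P ∧ (dsq δ q.1 q.2 ∩ Metric.closedBall x r).Nonempty}.ncard : ℝ)
    ≤ (((P.filter (fun q : ℤ×ℤ => |(q.1:ℝ)*δ - x 0| ≤ 2*r ∧ |(q.2:ℝ)*δ - x 1| ≤ 2*r))).card : ℝ) := by
  classical
  have hsub : {q : ℤ×ℤ | q ∈ P ∧ (dsq δ q.1 q.2 ∩ Metric.closedBall x r).Nonempty}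
      ⊆ ↑(P.filter (fun q : ℤ×ℤ => |(q.1:ℝ)*δ - x 0| ≤ 2*r ∧ |(q.2:ℝ)*δ - x 1| ≤ 2*r)) := by
    intro q hq
    obtain ⟨hqP, z, hz1, hz2⟩ := hq
    obtain ⟨hzx, hzy⟩ := hz1
    rw [Metric.mem_closedBall] at hz2
    have hd0 : |z 0 - x 0| ≤ r := le_trans (abs_coord_le_dist z x 0) hz2
    have hd1 : |z 1 - x 1| ≤ r := le_trans (abs_coord_le_dist z x 1) hz2
    simp only [Finset.coe_filter, Set.mem_setOf_eq]
    refine ⟨hqP, ?_, ?_⟩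
    · have h1 : |(q.1:ℝ)*δ - z 0| ≤ δ := by
        rw [abs_le]
        obtain ⟨ha, hb⟩ := hzx
        push_cast at hb
        constructor <;> nlinarith
      calc |(q.1:ℝ)*δ - x 0| ≤ |(q.1:ℝ)*δ - z 0| + |z 0 - x 0| := abs_sub_le _ _ _
        _ ≤ δ + r := add_le_add h1 hd0
        _ ≤ 2*r := by linarith
    · have h1 : |(q.2:ℝ)*δ - z 1| ≤ δ := by
        rw [abs_le]
        obtain ⟨ha, hb⟩ := hzy
        push_cast at hb
        constructor <;> nlinarith
      calc |(q.2:ℝ)*δ - x 1| ≤ |(q.2:ℝ)*δ - z 1| + |z 1 - x 1| := abs_sub_le _ _ _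
        _ ≤ δ + r := add_le_add h1 hd1
        _ ≤ 2*r := by linarith
  have hfin : (↑(P.filter (fun q : ℤ×ℤ => |(q.1:ℝ)*δ - x 0| ≤ 2*r ∧ |(q.2:ℝ)*δ - x 1| ≤ 2*r)) : Set (ℤ×ℤ)).Finite :=
    Finset.finite_toSet _
  have := Set.ncard_le_ncard hsub hfin
  rw [Set.ncard_coe_finset] at this
  exact_mod_cast this

set_option maxHeartbeats 2000000 in
lemma arith_main {t r : ℝ} (h1 : 1 ≤ t) (h2 : t < 2)
    (hml : (N:ℝ)*t/2 ≤ m) (hmh : (m:ℝ) ≤ (N:ℝ)*t/2 + 1)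
    (hm2 : N ≤ 2*m) (hmn : m ≤ N) (hr1 : del N ≤ r) (hr2 : r ≤ 1) :
    (4*r*(2:ℝ)^m + 1)^2 +
      2*((4*r*(2:ℝ)^(N-m) + 3) * (min (4*r*(2:ℝ)^N + 1) ((2:ℝ)^m)) * (96*(2:ℝ)^(2*m-N)*r + 1))
    ≤ 30000 * (r / del N)^t := by
  have hδ : 0 < del N := del_pos N
  have hr0 : 0 < r := lt_of_lt_of_le hδ hr1
  have h2N : (0:ℝ) < (2:ℝ)^N := by positivity
  have hρeq : r / del N = r * (2:ℝ)^N := div_del r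
  have hρ1 : 1 ≤ r * (2:ℝ)^N := by
    rw [← hρeq, le_div_iff₀ hδ]; linarith
  have hTeq : (r / del N)^t = r^t * ((2:ℝ)^N)^t := by
    rw [hρeq, Real.mul_rpow hr0.le h2N.le]
  have hT1 : 1 ≤ (r / del N)^t := by
    rw [hρeq]
    exact Real.one_le_rpow hρ1 (by linarith)
  have hρT : r * (2:ℝ)^N ≤ (r / del N)^t := by
    rw [hρeq]
    calc r * (2:ℝ)^N = (r * (2:ℝ)^N)^(1:ℝ) := (Real.rpow_one _).symm
      _ ≤ (r * (2:ℝ)^N)^t := Real.rpow_le_rpow_of_exponent_le hρ1 h1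
  -- powers of two as rpow
  have hpow : ∀ k : ℕ, (2:ℝ)^k = (2:ℝ)^(k:ℝ) := fun k => (Real.rpow_natCast 2 k).symm
  have h2Nt : ((2:ℝ)^N)^t = (2:ℝ)^((N:ℝ)*t) := by
    rw [hpow N, ← Real.rpow_mul (by norm_num)]
  have hKb : (2:ℝ)^m ≤ 2 * (2:ℝ)^((N:ℝ)*t/2) := by
    rw [hpow m]
    calc (2:ℝ)^(m:ℝ) ≤ (2:ℝ)^((N:ℝ)*t/2 + 1) := Real.rpow_le_rpow_of_exponent_le (by norm_num) hmh
      _ = 2 * (2:ℝ)^((N:ℝ)*t/2) := by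
          rw [Real.rpow_add (by norm_num), Real.rpow_one]; ring
  have hKsq : ((2:ℝ)^m)^2 ≤ 4 * ((2:ℝ)^N)^t := by
    have hKnn : (0:ℝ) ≤ (2:ℝ)^m := by positivity
    have h4 : (2 * (2:ℝ)^((N:ℝ)*t/2))^2 = 4 * (2:ℝ)^((N:ℝ)*t) := by
      have : (2:ℝ)^((N:ℝ)*t/2) * (2:ℝ)^((N:ℝ)*t/2) = (2:ℝ)^((N:ℝ)*t) := by
        rw [← Real.rpow_add (by norm_num)]; ring_nf
      nlinarith [this]
    rw [h2Nt, ← h4]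
    nlinarith [hKb, hKnn, Real.rpow_nonneg (le_of_lt (by norm_num : (0:ℝ) < 2)) ((N:ℝ)*t/2)]
  have hJb : (2:ℝ)^(2*m-N) ≤ 4 * (2:ℝ)^((N:ℝ)*(t-1)) := by
    rw [hpow (2*m-N)]
    have hcast : ((2*m - N : ℕ):ℝ) = 2*(m:ℝ) - (N:ℝ) := by
      have : (N:ℝ) ≤ 2*(m:ℝ) := by exact_mod_cast hm2
      push_cast [Nat.cast_sub hm2]
      ring
    rw [hcast]
    calc (2:ℝ)^(2*(m:ℝ) - (N:ℝ)) ≤ (2:ℝ)^((N:ℝ)*(t-1) + 2) := by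
          apply Real.rpow_le_rpow_of_exponent_le (by norm_num)
          nlinarith
      _ = 4 * (2:ℝ)^((N:ℝ)*(t-1)) := by
          rw [Real.rpow_add (by norm_num)]
          norm_num
          ring
  have hr2t : r^(2:ℕ) ≤ r^t := by
    have := Real.rpow_le_rpow_of_exponent_ge hr0 hr2 (le_of_lt h2)
    calc r^(2:ℕ) = r^((2:ℕ):ℝ) := by rw [Real.rpow_natCast]
      _ ≤ r^t := by
          apply Real.rpow_le_rpow_of_exponent_ge hr0 hr2
          exact_mod_cast (le_of_lt h2)
  have hTnn : (0:ℝ) ≤ (r / del N)^t := by positivity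
  have h2Ntnn : (0:ℝ) ≤ ((2:ℝ)^N)^t := by positivity
  -- piece 1
  have B1 : (4*r*(2:ℝ)^m + 1)^2 ≤ 100 * (r / del N)^t := by
    rcases le_or_gt (r * (2:ℝ)^m) 1 with hc | hc
    · have : (4*r*(2:ℝ)^m + 1)^2 ≤ 25 := by nlinarith [mul_pos hr0 (by positivity : (0:ℝ) < (2:ℝ)^m)]
      nlinarith
    · have hstep : (4*r*(2:ℝ)^m + 1)^2 ≤ 25 * (r*(2:ℝ)^m)^2 := by nlinarith
      have hstep2 : (r*(2:ℝ)^m)^2 = r^(2:ℕ) * ((2:ℝ)^m)^2 := by ring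
      have hstep3 : r^(2:ℕ) * ((2:ℝ)^m)^2 ≤ r^t * (4 * ((2:ℝ)^N)^t) := by
        apply mul_le_mul hr2t hKsq (by positivity)
        positivity
      rw [hTeq]
      nlinarith
  -- piece 2 : UV ≤ 35 ρ
  have hVnn : (0:ℝ) ≤ min (4*r*(2:ℝ)^N + 1) ((2:ℝ)^m) := le_min (by positivity) (by positivity)
  have B2 : (4*r*(2:ℝ)^(N-m) + 3) * (min (4*r*(2:ℝ)^N + 1) ((2:ℝ)^m)) ≤ 35 * (r * (2:ℝ)^N) := by
    rcases le_or_gt (r * (2:ℝ)^(N-m)) 1 with hc | hc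
    · have hU : (4*r*(2:ℝ)^(N-m) + 3) ≤ 7 := by nlinarith [mul_pos hr0 (by positivity : (0:ℝ) < (2:ℝ)^(N-m))]
      have hV : min (4*r*(2:ℝ)^N + 1) ((2:ℝ)^m) ≤ 5 * (r * (2:ℝ)^N) := by
        refine le_trans (min_le_left _ _) ?_
        nlinarith
      calc (4*r*(2:ℝ)^(N-m) + 3) * (min (4*r*(2:ℝ)^N + 1) ((2:ℝ)^m))
          ≤ 7 * (5 * (r * (2:ℝ)^N)) := by
            apply mul_le_mul hU hV hVnn (by norm_num)
        _ = 35 * (r * (2:ℝ)^N) := by ring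
    · have hU : (4*r*(2:ℝ)^(N-m) + 3) ≤ 7 * (r * (2:ℝ)^(N-m)) := by nlinarith
      have hV : min (4*r*(2:ℝ)^N + 1) ((2:ℝ)^m) ≤ (2:ℝ)^m := min_le_right _ _
      have hprod : (2:ℝ)^(N-m) * (2:ℝ)^m = (2:ℝ)^N := pow_sub_mul hmn
      calc (4*r*(2:ℝ)^(N-m) + 3) * (min (4*r*(2:ℝ)^N + 1) ((2:ℝ)^m))
          ≤ (7 * (r * (2:ℝ)^(N-m))) * (2:ℝ)^m := by
            apply mul_le_mul hU hV hVnn (by positivity)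
        _ = 35 * (r * (2:ℝ)^N) * (1/5) := by
            rw [← hprod]; ring
        _ ≤ 35 * (r * (2:ℝ)^N) := by nlinarith
  -- piece 3
  have hUVnn : (0:ℝ) ≤ (4*r*(2:ℝ)^(N-m) + 3) * (min (4*r*(2:ℝ)^N + 1) ((2:ℝ)^m)) := by
    apply mul_nonneg (by positivity) hVnn
  have B3 : (4*r*(2:ℝ)^(N-m) + 3) * (min (4*r*(2:ℝ)^N + 1) ((2:ℝ)^m)) * (96*(2:ℝ)^(2*m-N)*r + 1)
      ≤ 13580 * (r / del N)^t := by
    rcases le_or_gt ((2:ℝ)^(2*m-N) * r) 1 with hc | hc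
    · have hW : (96*(2:ℝ)^(2*m-N)*r + 1) ≤ 97 := by nlinarith [mul_pos (by positivity : (0:ℝ) < (2:ℝ)^(2*m-N)) hr0]
      calc _ ≤ (35 * (r * (2:ℝ)^N)) * 97 := by
            apply mul_le_mul B2 hW (by positivity) (by positivity)
        _ ≤ 3395 * (r / del N)^t := by nlinarith [hρT]
        _ ≤ 13580 * (r / del N)^t := by nlinarith [hTnn]
    · have hW : (96*(2:ℝ)^(2*m-N)*r + 1) ≤ 97 * ((2:ℝ)^(2*m-N) * r) := by nlinarith
      have hJr : (2:ℝ)^(2*m-N) * r ≤ 4 * (2:ℝ)^((N:ℝ)*(t-1)) * r := by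
        apply mul_le_mul_of_nonneg_right hJb hr0.le
      have key : (r * (2:ℝ)^N) * ((2:ℝ)^(2*m-N) * r) ≤ 4 * (r^(2:ℕ) * ((2:ℝ)^N)^t) := by
        have hid : (2:ℝ)^((N:ℝ)*(t-1)) * (2:ℝ)^N = ((2:ℝ)^N)^t := by
          rw [hpow N, ← Real.rpow_add (by norm_num), ← Real.rpow_mul (by norm_num : (0:ℝ) ≤ 2)]
          congr 1; ring
        have expand : (r * (2:ℝ)^N) * ((4 * (2:ℝ)^((N:ℝ)*(t-1))) * r)
            = 4 * (r^(2:ℕ) * ((2:ℝ)^((N:ℝ)*(t-1)) * (2:ℝ)^N)) := by ring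
        calc (r * (2:ℝ)^N) * ((2:ℝ)^(2*m-N) * r)
            ≤ (r * (2:ℝ)^N) * ((4 * (2:ℝ)^((N:ℝ)*(t-1))) * r) := by
              apply mul_le_mul_of_nonneg_left _ (by positivity)
              nlinarith [hJb]
          _ = 4 * (r^(2:ℕ) * ((2:ℝ)^((N:ℝ)*(t-1)) * (2:ℝ)^N)) := expand
          _ = 4 * (r^(2:ℕ) * ((2:ℝ)^N)^t) := by rw [hid]
      have hr2T : r^(2:ℕ) * ((2:ℝ)^N)^t ≤ (r / del N)^t := by
        rw [hTeq]
        apply mul_le_mul_of_nonneg_right hr2t h2Ntnn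
      calc _ ≤ (35 * (r * (2:ℝ)^N)) * (97 * ((2:ℝ)^(2*m-N) * r)) := by
            apply mul_le_mul B2 hW (by positivity) (by positivity)
        _ = 3395 * ((r * (2:ℝ)^N) * ((2:ℝ)^(2*m-N) * r)) := by ring
        _ ≤ 3395 * (4 * (r^(2:ℕ) * ((2:ℝ)^N)^t)) := by nlinarith [key]
        _ = 13580 * (r^(2:ℕ) * ((2:ℝ)^N)^t) := by ring
        _ ≤ 13580 * (r / del N)^t := by nlinarith [hr2T]
  nlinarith [B1, B3, hTnn]

lemma dsq_subset_unit {j k : ℤ} (h0 : 0 ≤ j) (h1 : j + 1 ≤ 2^N) (h2 : 0 ≤ k) (h3 : k + 1 ≤ 2^N) :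
    dsq (del N) j k ⊆ unitSq := by
  intro z hz
  obtain ⟨⟨hx0, hx1⟩, hy0, hy1⟩ := hz
  have hδ : 0 < del N := del_pos N
  have hδ1 : (2:ℝ)^N * del N = 1 := by
    unfold del; field_simp
  have c1 : ∀ a : ℤ, 0 ≤ a → (0:ℝ) ≤ (a:ℝ) * del N := by
    intro a ha
    apply mul_nonneg (by exact_mod_cast ha) hδ.le
  have c2 : ∀ a : ℤ, a + 1 ≤ 2^N → ((a:ℝ) + 1) * del N ≤ 1 := by
    intro a ha
    have : ((a:ℝ) + 1) ≤ (2:ℝ)^N := by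
      have : ((a + 1 : ℤ):ℝ) ≤ (((2:ℤ)^N : ℤ):ℝ) := by exact_mod_cast ha
      push_cast at this
      linarith
    nlinarith
  constructor
  · exact ⟨le_trans (c1 j h0) hx0, le_trans hx1 (c2 j h1)⟩
  · exact ⟨le_trans (c1 k h2) hy0, le_trans hy1 (c2 k h3)⟩

lemma j_bound (hm2 : N ≤ 2*m) (hmn : m ≤ N) {i : ℤ} (hlo : -(2^m:ℤ) ≤ i) (hhi : i ≤ 2^m) :
    -(2^(2*m-N):ℤ) ≤ i / Qz m N ∧ i / Qz m N ≤ 2^(2*m-N) := by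
  have hQpos : (0:ℤ) < Qz m N := by unfold Qz; positivity
  have hKid : ((2:ℤ)^(2*m-N)) * Qz m N = 2^m := JQKz hm2 hmn
  constructor
  · have h1 : (-(2^(2*m-N):ℤ)) * Qz m N ≤ i := by rw [neg_mul, hKid]; exact hlo
    have := Int.le_ediv_iff_mul_le hQpos (a := -(2^(2*m-N):ℤ)) (b := i)
    rw [this]
    exact h1
  · have h1 : i ≤ (2^(2*m-N):ℤ) * Qz m N := by rw [hKid]; exact hhi
    have h2 : i / Qz m N ≤ ((2^(2*m-N):ℤ) * Qz m N) / Qz m N := by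
      apply Int.ediv_le_ediv hQpos h1
    rwa [Int.mul_ediv_cancel _ (ne_of_gt hQpos)] at h2

lemma eta_J : ((2:ℝ)^(2*m-N) + 1) * eta m N = 1/8 := by
  unfold eta
  have : ((2:ℝ)^(2*m-N) + 1) ≠ 0 := by positivity
  field_simp

lemma Y_bounds (hm2 : N ≤ 2*m) (hm4 : m + 4 ≤ N) {i ℓ : ℤ}
    (hlo : -(2^m:ℤ) ≤ i) (hhi : i ≤ 2^m) (hl0 : 0 ≤ ℓ) (hl1 : ℓ ≤ 2^m - 1) :
    5/16 ≤ Yf m N i ℓ ∧ Yf m N i ℓ ≤ 11/16 := by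
  have hmn : m ≤ N := by omega
  have hδ : 0 < del N := del_pos N
  obtain ⟨hj1, hj2⟩ := j_bound hm2 hmn hlo hhi
  have hη := eta_pos m N
  have hJc : ((i / Qz m N : ℤ):ℝ) ≤ (2:ℝ)^(2*m-N) := by exact_mod_cast hj2
  have hJc2 : -((2:ℝ)^(2*m-N)) ≤ ((i / Qz m N : ℤ):ℝ) := by exact_mod_cast hj1
  have habs1 : |((i / Qz m N : ℤ):ℝ) * eta m N| ≤ 1/8 := by
    rw [abs_mul, abs_of_pos hη]
    have h1 : |((i / Qz m N : ℤ):ℝ)| ≤ (2:ℝ)^(2*m-N) + 1 := by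
      rw [abs_le]; constructor <;> nlinarith [pow_pos (by norm_num : (0:ℝ) < 2) (2*m-N)]
    have := eta_J (m := m) (N := N)
    nlinarith
  -- second term
  have hiσ : |(i:ℝ) * ((2:ℝ)^m)⁻¹| ≤ 1 := by
    have hK : (0:ℝ) < (2:ℝ)^m := by positivity
    have habsi : |(i:ℝ)| ≤ (2:ℝ)^m := by
      rw [abs_le]
      constructor
      · exact_mod_cast hlo
      · exact_mod_cast hhi
    rw [abs_mul, abs_of_pos (inv_pos.mpr hK)]
    calc |(i:ℝ)| * ((2:ℝ)^m)⁻¹ ≤ (2:ℝ)^m * ((2:ℝ)^m)⁻¹ :=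
          mul_le_mul_of_nonneg_right habsi (inv_pos.mpr hK).le
      _ = 1 := mul_inv_cancel₀ (ne_of_gt hK)
  have hld : 0 ≤ (ℓ:ℝ) * del N ∧ (ℓ:ℝ) * del N ≤ (2:ℝ)^m * del N := by
    constructor
    · apply mul_nonneg (by exact_mod_cast hl0) hδ.le
    · apply mul_le_mul_of_nonneg_right _ hδ.le
      have : (ℓ:ℝ) ≤ (2:ℝ)^m - 1 := by
        have : ((ℓ:ℤ):ℝ) ≤ (((2:ℤ)^m - 1 : ℤ):ℝ) := by exact_mod_cast hl1
        push_cast at this; linarith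
      linarith
  have hLsmall : (2:ℝ)^m * del N ≤ 1/16 := by
    have : (2:ℝ)^m * del N = ((2:ℝ)^(N-m))⁻¹ := LId hmn
    rw [this]
    have h16 : (16:ℝ) ≤ (2:ℝ)^(N-m) := by
      calc (16:ℝ) = 2^4 := by norm_num
        _ ≤ (2:ℝ)^(N-m) := pow_le_pow_right₀ (by norm_num) (by omega)
    rw [show (1/16 : ℝ) = ((16:ℝ))⁻¹ by norm_num]
    apply inv_anti₀ (by norm_num) h16
  have habs2 : |((i:ℝ) * ((2:ℝ)^m)⁻¹) * ((ℓ:ℝ) * del N)| ≤ 1/16 := by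
    rw [abs_mul]
    have h2 : |(ℓ:ℝ) * del N| ≤ 1/16 := by
      rw [abs_of_nonneg hld.1]; linarith [hld.2]
    calc |(i:ℝ) * ((2:ℝ)^m)⁻¹| * |(ℓ:ℝ) * del N| ≤ 1 * (1/16) := by
          apply mul_le_mul hiσ h2 (abs_nonneg _) (by norm_num)
      _ = 1/16 := by norm_num
  unfold Yf
  rw [abs_le] at habs1 habs2
  constructor <;> [linarith [habs1.1, habs2.1]; linarith [habs1.2, habs2.2]]

lemma QK_N (hmn : m ≤ N) : ((2:ℤ)^(N-m)) * 2^m = 2^N := by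
  rw [← pow_add]; congr 1; omega

lemma f2_mem_bounds (hm2 : N ≤ 2*m) (hm4 : m + 4 ≤ N) {i ℓ : ℤ}
    (hlo : -(2^m:ℤ) ≤ i) (hhi : i ≤ 2^m) (hl0 : 0 ≤ ℓ) (hl1 : ℓ ≤ 2^m - 1) :
    0 ≤ (f2 m N (i,ℓ)).1 ∧ (f2 m N (i,ℓ)).1 + 1 ≤ 2^N ∧
    0 ≤ (f2 m N (i,ℓ)).2 ∧ (f2 m N (i,ℓ)).2 + 1 ≤ 2^N := by
  have hmn : m ≤ N := by omega
  have hδ : 0 < del N := del_pos N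
  have hQpos : (0:ℤ) < Qz m N := by unfold Qz; positivity
  have ha0 : 0 ≤ i % Qz m N := Int.emod_nonneg i (ne_of_gt hQpos)
  have ha1 : i % Qz m N < Qz m N := Int.emod_lt_of_pos i hQpos
  obtain ⟨hY1, hY2⟩ := Y_bounds hm2 hm4 hlo hhi hl0 hl1
  have hfl0 : 0 ≤ ⌊Yf m N i ℓ / del N⌋ := by
    apply Int.floor_nonneg.mpr
    positivity
  have hfl1 : ⌊Yf m N i ℓ / del N⌋ + 1 ≤ 2^N := by
    have h1 : (⌊Yf m N i ℓ / del N⌋ : ℝ) ≤ Yf m N i ℓ / del N := Int.floor_le _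
    have h2 : Yf m N i ℓ / del N < (2:ℝ)^N := by
      rw [div_lt_iff₀ hδ]
      have : (2:ℝ)^N * del N = 1 := by unfold del; field_simp
      rw [this]
      linarith
    have : (⌊Yf m N i ℓ / del N⌋ : ℝ) < ((2:ℕ)^N : ℝ) := by
      push_cast
      linarith
    have : ⌊Yf m N i ℓ / del N⌋ < ((2:ℤ))^N := by exact_mod_cast this
    omega
  refine ⟨?_, ?_, hfl0, hfl1⟩
  · simp only [f2]
    positivity
  · simp only [f2]
    have : (i % Qz m N) * 2^m + ℓ ≤ (Qz m N - 1) * 2^m + (2^m - 1) := by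
      have : (i % Qz m N) ≤ Qz m N - 1 := by omega
      have h2 : (i % Qz m N) * 2^m ≤ (Qz m N - 1) * 2^m := by
        apply mul_le_mul_of_nonneg_right this (by positivity)
      omega
    have hQK := QK_N (m := m) (N := N) hmn
    unfold Qz at *
    nlinarith

lemma PP_subset_unit (hm2 : N ≤ 2*m) (hm4 : m + 4 ≤ N) :
    ∀ q ∈ PP m N, dsq (del N) q.1 q.2 ⊆ unitSq := by
  have hmn : m ≤ N := by omega
  intro q hq
  rw [PP, Finset.mem_union, Finset.mem_union] at hq
  rcases hq with (hq | hq) | hq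
  · rw [P1, Finset.mem_image] at hq
    obtain ⟨p, hp, hpq⟩ := hq
    rw [Finset.mem_product, Finset.mem_Icc, Finset.mem_Icc] at hp
    subst hpq
    dsimp only
    have hQ1 : (1:ℤ) ≤ 2^(N-m) := one_le_pow₀ (by norm_num)
    have hQK := QK_N (m := m) (N := N) hmn
    have hb1 : p.1 * 2^(N-m) ≤ (2^m - 1) * 2^(N-m) :=
      mul_le_mul_of_nonneg_right hp.1.2 (by positivity)
    have hb2 : p.2 * 2^(N-m) ≤ (2^m - 1) * 2^(N-m) :=
      mul_le_mul_of_nonneg_right hp.2.2 (by positivity)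
    apply dsq_subset_unit
    · exact mul_nonneg hp.1.1 (by positivity)
    · nlinarith
    · exact mul_nonneg hp.2.1 (by positivity)
    · nlinarith
  · rw [P2, Finset.mem_image] at hq
    obtain ⟨p, hp, hpq⟩ := hq
    rw [D2, Finset.mem_product, Finset.mem_Icc, Finset.mem_Icc] at hp
    obtain ⟨⟨h1, h2⟩, h3, h4⟩ := hp
    have hb := f2_mem_bounds hm2 hm4 h1 h2 h3 h4
    rw [show ((p.1, p.2) : ℤ×ℤ) = p from rfl] at hb
    subst hpq
    exact dsq_subset_unit hb.1 hb.2.1 hb.2.2.1 hb.2.2.2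
  · rw [Finset.mem_image] at hq
    obtain ⟨p', hp', hpq⟩ := hq
    rw [P2, Finset.mem_image] at hp'
    obtain ⟨p, hp, hpq'⟩ := hp'
    rw [D2, Finset.mem_product, Finset.mem_Icc, Finset.mem_Icc] at hp
    obtain ⟨⟨h1, h2⟩, h3, h4⟩ := hp
    have hb := f2_mem_bounds hm2 hm4 h1 h2 h3 h4
    rw [show ((p.1, p.2) : ℤ×ℤ) = p from rfl] at hb
    subst hpq'
    subst hpq
    exact dsq_subset_unit hb.2.2.1 hb.2.2.2 hb.1 hb.2.1

lemma P1_card : (P1 m N).card = 2^m * 2^m := by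
  rw [P1]
  rw [Finset.card_image_of_injOn]
  · rw [Finset.card_product, Int.card_Icc]
    have h2m : ((2:ℤ)^m - 1 + 1 - 0) = ((2^m : ℕ) : ℤ) := by push_cast; ring
    rw [h2m, Int.toNat_natCast]
  · intro p _ p' _ hpp
    have hQ : (0:ℤ) < 2^(N-m) := by positivity
    have h1 : p.1 * 2^(N-m) = p'.1 * 2^(N-m) := congrArg (·.1) hpp
    have h2 : p.2 * 2^(N-m) = p'.2 * 2^(N-m) := congrArg (·.2) hpp
    have e1 : p.1 = p'.1 := by
      exact mul_right_cancel₀ (ne_of_gt hQ) h1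
    have e2 : p.2 = p'.2 := mul_right_cancel₀ (ne_of_gt hQ) h2
    exact Prod.ext e1 e2

lemma PP_card_ge : (2:ℝ)^m * (2:ℝ)^m ≤ ((PP m N).card : ℝ) := by
  have h1 : P1 m N ⊆ PP m N := by
    rw [PP]
    exact Finset.Subset.trans Finset.subset_union_left Finset.subset_union_left
  have := Finset.card_le_card h1
  rw [P1_card] at this
  have : ((2^m * 2^m : ℕ) : ℝ) ≤ ((PP m N).card : ℝ) := by exact_mod_cast this
  push_cast at this
  linarith

lemma theta_norm {θ : EuclideanSpace ℝ (Fin 2)} (hθ : ‖θ‖ = 1) : θ 0^2 + θ 1^2 = 1 := by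
  have h := EuclideanSpace.norm_eq θ
  rw [hθ, Fin.sum_univ_two] at h
  have := (Real.sqrt_eq_one).mp h.symm
  simpa [Real.norm_eq_abs, sq_abs] using this

lemma theta_abs_le {θ : EuclideanSpace ℝ (Fin 2)} (hθ : ‖θ‖ = 1) : |θ 0| ≤ 1 ∧ |θ 1| ≤ 1 := by
  have h := theta_norm hθ
  constructor <;> (rw [abs_le]; constructor <;> nlinarith [sq_nonneg (θ 0), sq_nonneg (θ 1)])

lemma round_bounds {s : ℝ} (hs : |s| ≤ 1) :
    -(2^m:ℤ) ≤ round (s * 2^m) ∧ round (s * 2^m) ≤ 2^m ∧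
    |(round (s * (2:ℝ)^m) : ℝ) - s * 2^m| ≤ 1/2 := by
  have h1 : |s * (2:ℝ)^m - (round (s * (2:ℝ)^m) : ℝ)| ≤ 1/2 := abs_sub_round _
  have h2 : |(round (s * (2:ℝ)^m) : ℝ) - s * 2^m| ≤ 1/2 := by
    rw [abs_sub_comm]; exact h1
  have hK : (0:ℝ) < (2:ℝ)^m := by positivity
  have hsK : |s * (2:ℝ)^m| ≤ (2:ℝ)^m := by
    rw [abs_mul, abs_of_pos hK]
    nlinarith [abs_nonneg s]
  rw [abs_le] at h2 hsK
  refine ⟨?_, ?_, by rw [abs_le]; exact h2⟩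
  · have : ((-(2^m:ℤ) : ℤ):ℝ) ≤ ((round (s * (2:ℝ)^m) : ℤ):ℝ) + 1/2 := by
      push_cast
      linarith [h2.1, hsK.1]
    have : ((-(2^m:ℤ) : ℤ):ℝ) < ((round (s * (2:ℝ)^m) : ℤ):ℝ) + 1 := by linarith
    have : (-(2^m:ℤ) : ℤ) < round (s * (2:ℝ)^m) + 1 := by exact_mod_cast this
    omega
  · have : ((round (s * (2:ℝ)^m) : ℤ):ℝ) < (((2^m:ℤ) : ℤ):ℝ) + 1 := by
      push_cast
      linarith [h2.2, hsK.2]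
    have : round (s * (2:ℝ)^m) < (2^m:ℤ) + 1 := by exact_mod_cast this
    omega

lemma dsq_point_bounds {j k : ℤ} {z : EuclideanSpace ℝ (Fin 2)} (hz : z ∈ dsq (del N) j k) :
    |z 0 - (j:ℝ)*del N| ≤ del N ∧ |z 1 - (k:ℝ)*del N| ≤ del N := by
  obtain ⟨⟨hx0, hx1⟩, hy0, hy1⟩ := hz
  push_cast at hx1 hy1
  constructor <;> (rw [abs_le]; constructor <;> nlinarith [del_pos N])

lemma floor_scale (Y : ℝ) : ((⌊Y / del N⌋:ℤ):ℝ) * del N ≤ Y ∧ Y ≤ ((⌊Y / del N⌋:ℤ):ℝ) * del N + del N := by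
  have h1 := Int.floor_le (Y / del N)
  have h2 := Int.lt_floor_add_one (Y / del N)
  have hδ : 0 < del N := del_pos N
  constructor
  · have := mul_le_mul_of_nonneg_right h1 hδ.le
    rwa [div_mul_cancel₀ _ (ne_of_gt hδ)] at this
  · have := mul_le_mul_of_nonneg_right h2.le hδ.le
    rw [div_mul_cancel₀ _ (ne_of_gt hδ)] at this
    nlinarith

set_option maxHeartbeats 4000000 in
lemma tube_main (hm2 : N ≤ 2*m) (hm4 : m + 4 ≤ N)
    (θ : EuclideanSpace ℝ (Fin 2)) (hθ : ‖θ‖ = 1) :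
    ∃ (α β : ℝ) (S : Finset (ℤ×ℤ)), S ⊆ PP m N ∧
      β - α ≤ 6 * del N ∧
      ((2:ℝ)^m ≤ (S.card : ℝ)) ∧
      ∀ q ∈ S, ∀ z ∈ dsq (del N) q.1 q.2, proj θ z ∈ Set.Icc α β := by
  classical
  have hδ : 0 < del N := del_pos N
  obtain ⟨hθ0, hθ1⟩ := theta_abs_le hθ
  have hσK : ((2:ℝ)^m)⁻¹ * (2:ℝ)^m = 1 := inv_mul_cancel₀ (by positivity)
  rcases le_or_gt (|θ 1|) (|θ 0|) with hc | hc
  -- CASE A : shallow slope, use P2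
  · have hθ0ne : θ 0 ≠ 0 := by
      intro h0
      have h := theta_norm hθ
      rw [h0] at h hc
      simp only [abs_zero] at hc
      have : θ 1 = 0 := abs_eq_zero.mp (le_antisymm hc (abs_nonneg _))
      rw [this] at h
      norm_num at h
    set s : ℝ := θ 1 / θ 0 with hsdef
    have hθ1s : θ 1 = s * θ 0 := by
      rw [hsdef]; field_simp
    have hs : |s| ≤ 1 := by
      rw [hsdef, abs_div, div_le_one (abs_pos.mpr hθ0ne)]
      exact hc
    set i : ℤ := round (s * (2:ℝ)^m) with hidef
    obtain ⟨hilo, hihi, hiround⟩ := round_bounds (m := m) hs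
    set S : Finset (ℤ×ℤ) := (Finset.Icc (0:ℤ) (2^m - 1)).image (fun ℓ => f2 m N (i, ℓ)) with hSdef
    have hSP2 : S ⊆ P2 m N := by
      intro q hq
      rw [hSdef, Finset.mem_image] at hq
      obtain ⟨ℓ, hℓ, rfl⟩ := hq
      rw [P2, Finset.mem_image]
      refine ⟨(i, ℓ), ?_, rfl⟩
      rw [D2, Finset.mem_product, Finset.mem_Icc, Finset.mem_Icc]
      rw [Finset.mem_Icc] at hℓ
      exact ⟨⟨hilo, hihi⟩, hℓ⟩
    have hSsub : S ⊆ PP m N := by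
      refine hSP2.trans ?_
      rw [PP]
      exact Finset.Subset.trans Finset.subset_union_right Finset.subset_union_left
    have hScard : ((2:ℝ)^m ≤ (S.card:ℝ)) := by
      have hcc : S.card = 2^m := by
        rw [hSdef, Finset.card_image_of_injOn]
        · rw [Int.card_Icc]
          have h2m : ((2:ℤ)^m - 1 + 1 - 0) = ((2^m : ℕ) : ℤ) := by push_cast; ring
          rw [h2m, Int.toNat_natCast]
        · intro a _ b _ hab
          have h1 : (i % Qz m N)*2^m + a = (i % Qz m N)*2^m + b := congrArg (·.1) hab
          omega
      rw [hcc]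
      push_cast
      exact le_refl _
    set c0 : ℝ := (1/2 + ((i / Qz m N : ℤ):ℝ) * eta m N) * θ 0
        - ((i % Qz m N : ℤ):ℝ) * ((2:ℝ)^m * del N) * θ 1 with hc0
    refine ⟨c0 - 3*del N, c0 + 3*del N, S, hSsub, by linarith, hScard, ?_⟩
    intro q hq z hz
    rw [hSdef, Finset.mem_image] at hq
    obtain ⟨ℓ, hℓ, rfl⟩ := hq
    rw [Finset.mem_Icc] at hℓ
    obtain ⟨⟨hzx0, hzx1⟩, hzy0, hzy1⟩ := hz
    -- x-coordinate
    have hX : ((f2 m N (i, ℓ)).1 : ℝ) * del N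
        = ((i % Qz m N : ℤ):ℝ) * ((2:ℝ)^m * del N) + (ℓ:ℝ)*del N := by
      simp only [f2]
      push_cast
      ring
    have hzX : |z 0 - (((i % Qz m N : ℤ):ℝ) * ((2:ℝ)^m * del N) + (ℓ:ℝ)*del N)| ≤ del N := by
      rw [← hX, abs_le]
      push_cast at hzx1
      constructor <;> nlinarith
    -- y-coordinate
    have hfs := floor_scale (N := N) (Yf m N i ℓ)
    have hzY : |z 1 - Yf m N i ℓ| ≤ del N := by
      have e2 : ((f2 m N (i, ℓ)).2 : ℝ) = ((⌊Yf m N i ℓ / del N⌋:ℤ):ℝ) := by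
        simp only [f2]
      rw [e2] at hzy0 hzy1
      push_cast at hzy1
      rw [abs_le]
      constructor <;> nlinarith [hfs.1, hfs.2]
    -- center identity
    have hYexp : Yf m N i ℓ * θ 0 - (((i % Qz m N : ℤ):ℝ) * ((2:ℝ)^m * del N) + (ℓ:ℝ)*del N) * θ 1 - c0
        = ((ℓ:ℝ)*del N) * (((i:ℝ) * ((2:ℝ)^m)⁻¹) * θ 0 - θ 1) := by
      rw [hc0]
      unfold Yf
      ring
    have hslope : |((i:ℝ) * ((2:ℝ)^m)⁻¹) * θ 0 - θ 1| ≤ ((2:ℝ)^m)⁻¹ / 2 := by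
      rw [hθ1s]
      have hfac : ((i:ℝ) * ((2:ℝ)^m)⁻¹) * θ 0 - s * θ 0 = (((i:ℝ) - s * (2:ℝ)^m) * ((2:ℝ)^m)⁻¹) * θ 0 := by
        field_simp
      rw [hfac, abs_mul, abs_mul]
      have h1 : |(i:ℝ) - s * (2:ℝ)^m| ≤ 1/2 := hiround
      have h2 : |((2:ℝ)^m)⁻¹| = ((2:ℝ)^m)⁻¹ := abs_of_pos (by positivity)
      rw [h2]
      calc |(i:ℝ) - s*(2:ℝ)^m| * ((2:ℝ)^m)⁻¹ * |θ 0|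
          ≤ (1/2) * ((2:ℝ)^m)⁻¹ * 1 := by
            apply mul_le_mul _ hθ0 (abs_nonneg _) (by positivity)
            apply mul_le_mul_of_nonneg_right h1 (by positivity)
        _ = ((2:ℝ)^m)⁻¹ / 2 := by ring
    have hdrift : |((ℓ:ℝ)*del N) * (((i:ℝ) * ((2:ℝ)^m)⁻¹) * θ 0 - θ 1)| ≤ del N / 2 := by
      rw [abs_mul]
      have hl : |(ℓ:ℝ)*del N| ≤ (2:ℝ)^m * del N := by
        rw [abs_of_nonneg (by
          apply mul_nonneg _ hδ.le
          exact_mod_cast hℓ.1)]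
        apply mul_le_mul_of_nonneg_right _ hδ.le
        have : ((ℓ:ℤ):ℝ) ≤ (((2:ℤ)^m - 1 : ℤ):ℝ) := by exact_mod_cast hℓ.2
        push_cast at this
        linarith
      calc |(ℓ:ℝ)*del N| * |((i:ℝ) * ((2:ℝ)^m)⁻¹) * θ 0 - θ 1|
          ≤ ((2:ℝ)^m * del N) * (((2:ℝ)^m)⁻¹ / 2) := by
            apply mul_le_mul hl hslope (abs_nonneg _) (by positivity)
        _ = del N / 2 := by
            rw [show ((2:ℝ)^m * del N) * (((2:ℝ)^m)⁻¹ / 2)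
                = (((2:ℝ)^m)⁻¹ * (2:ℝ)^m) * del N / 2 by ring, hσK]
            ring
    rw [proj_eq]
    have hkey : z 1 * θ 0 - z 0 * θ 1 - c0
        = (z 1 - Yf m N i ℓ) * θ 0
          - (z 0 - (((i % Qz m N : ℤ):ℝ) * ((2:ℝ)^m * del N) + (ℓ:ℝ)*del N)) * θ 1
          + (((ℓ:ℝ)*del N) * (((i:ℝ) * ((2:ℝ)^m)⁻¹) * θ 0 - θ 1)) := by
      rw [← hYexp]
      ring
    have habs : |z 1 * θ 0 - z 0 * θ 1 - c0| ≤ 3 * del N := by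
      rw [hkey]
      have t1 : |(z 1 - Yf m N i ℓ) * θ 0| ≤ del N := by
        rw [abs_mul]
        calc |z 1 - Yf m N i ℓ| * |θ 0| ≤ del N * 1 :=
              mul_le_mul hzY hθ0 (abs_nonneg _) hδ.le
          _ = del N := by ring
      have t2 : |(z 0 - (((i % Qz m N : ℤ):ℝ) * ((2:ℝ)^m * del N) + (ℓ:ℝ)*del N)) * θ 1| ≤ del N := by
        rw [abs_mul]
        calc _ ≤ del N * 1 := mul_le_mul hzX hθ1 (abs_nonneg _) hδ.le
          _ = del N := by ring
      calc |_ + _| ≤ |(z 1 - Yf m N i ℓ) * θ 0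
          - (z 0 - (((i % Qz m N : ℤ):ℝ) * ((2:ℝ)^m * del N) + (ℓ:ℝ)*del N)) * θ 1|
          + |((ℓ:ℝ)*del N) * (((i:ℝ) * ((2:ℝ)^m)⁻¹) * θ 0 - θ 1)| := abs_add_le _ _
        _ ≤ (del N + del N) + del N / 2 := by
            refine add_le_add ?_ (le_trans hdrift (le_refl _))
            calc |_ - _| ≤ |(z 1 - Yf m N i ℓ) * θ 0| + |(z 0 - (((i % Qz m N : ℤ):ℝ) * ((2:ℝ)^m * del N) + (ℓ:ℝ)*del N)) * θ 1| := abs_sub _ _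
              _ ≤ del N + del N := add_le_add t1 t2
        _ ≤ 3 * del N := by linarith
    rw [abs_le] at habs
    exact ⟨by linarith [habs.1], by linarith [habs.2]⟩
  -- CASE B : steep slope, use transposed family
  · have hθ1ne : θ 1 ≠ 0 := by
      intro h0
      rw [h0] at hc
      simp only [abs_zero] at hc
      exact absurd hc (not_lt.mpr (abs_nonneg _))
    set s : ℝ := θ 0 / θ 1 with hsdef
    have hθ0s : θ 0 = s * θ 1 := by
      rw [hsdef]; field_simp
    have hs : |s| ≤ 1 := by
      rw [hsdef, abs_div, div_le_one (abs_pos.mpr hθ1ne)]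
      exact hc.le
    set i : ℤ := round (s * (2:ℝ)^m) with hidef
    obtain ⟨hilo, hihi, hiround⟩ := round_bounds (m := m) hs
    set S : Finset (ℤ×ℤ) := (Finset.Icc (0:ℤ) (2^m - 1)).image
        (fun ℓ => Prod.swap (f2 m N (i, ℓ))) with hSdef
    have hSP3 : S ⊆ (P2 m N).image Prod.swap := by
      intro q hq
      rw [hSdef, Finset.mem_image] at hq
      obtain ⟨ℓ, hℓ, rfl⟩ := hq
      apply Finset.mem_image_of_mem
      rw [P2, Finset.mem_image]
      refine ⟨(i, ℓ), ?_, rfl⟩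
      rw [D2, Finset.mem_product, Finset.mem_Icc, Finset.mem_Icc]
      rw [Finset.mem_Icc] at hℓ
      exact ⟨⟨hilo, hihi⟩, hℓ⟩
    have hSsub : S ⊆ PP m N := by
      refine hSP3.trans ?_
      rw [PP]
      exact Finset.subset_union_right
    have hScard : ((2:ℝ)^m ≤ (S.card:ℝ)) := by
      have hcc : S.card = 2^m := by
        rw [hSdef, Finset.card_image_of_injOn]
        · rw [Int.card_Icc]
          have h2m : ((2:ℤ)^m - 1 + 1 - 0) = ((2^m : ℕ) : ℤ) := by push_cast; ring
          rw [h2m, Int.toNat_natCast]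
        · intro a _ b _ hab
          have h1 : (i % Qz m N)*2^m + a = (i % Qz m N)*2^m + b := congrArg (·.2) hab
          omega
      rw [hcc]
      push_cast
      exact le_refl _
    set c0 : ℝ := ((i % Qz m N : ℤ):ℝ) * ((2:ℝ)^m * del N) * θ 0
        - (1/2 + ((i / Qz m N : ℤ):ℝ) * eta m N) * θ 1 with hc0
    refine ⟨c0 - 3*del N, c0 + 3*del N, S, hSsub, by linarith, hScard, ?_⟩
    intro q hq z hz
    rw [hSdef, Finset.mem_image] at hq
    obtain ⟨ℓ, hℓ, rfl⟩ := hq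
    rw [Finset.mem_Icc] at hℓ
    obtain ⟨⟨hzx0, hzx1⟩, hzy0, hzy1⟩ := hz
    simp only [Prod.fst_swap, Prod.snd_swap] at hzx0 hzx1 hzy0 hzy1
    -- here q.1 = (f2).2 (the floor), q.2 = (f2).1
    have hX : (((f2 m N (i, ℓ)).1 : ℤ):ℝ) * del N
        = ((i % Qz m N : ℤ):ℝ) * ((2:ℝ)^m * del N) + (ℓ:ℝ)*del N := by
      simp only [f2]
      push_cast
      ring
    have hzX : |z 1 - (((i % Qz m N : ℤ):ℝ) * ((2:ℝ)^m * del N) + (ℓ:ℝ)*del N)| ≤ del N := by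
      rw [← hX, abs_le]
      have hzy1' := hzy1
      push_cast at hzy1'
      constructor <;> nlinarith [hzy0]
    have hfs := floor_scale (N := N) (Yf m N i ℓ)
    have hzY : |z 0 - Yf m N i ℓ| ≤ del N := by
      have e2 : (((f2 m N (i, ℓ)).2 : ℤ):ℝ) = ((⌊Yf m N i ℓ / del N⌋:ℤ):ℝ) := by
        simp only [f2]
      rw [e2] at hzx0 hzx1
      push_cast at hzx1
      rw [abs_le]
      constructor <;> nlinarith [hfs.1, hfs.2]
    have hYexp : (((i % Qz m N : ℤ):ℝ) * ((2:ℝ)^m * del N) + (ℓ:ℝ)*del N) * θ 0 - Yf m N i ℓ * θ 1 - c0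
        = ((ℓ:ℝ)*del N) * (θ 0 - ((i:ℝ) * ((2:ℝ)^m)⁻¹) * θ 1) := by
      rw [hc0]
      unfold Yf
      ring
    have hslope : |θ 0 - ((i:ℝ) * ((2:ℝ)^m)⁻¹) * θ 1| ≤ ((2:ℝ)^m)⁻¹ / 2 := by
      rw [hθ0s]
      have hfac : s * θ 1 - ((i:ℝ) * ((2:ℝ)^m)⁻¹) * θ 1
          = ((s * (2:ℝ)^m - (i:ℝ)) * ((2:ℝ)^m)⁻¹) * θ 1 := by
        field_simp
      rw [hfac, abs_mul, abs_mul]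
      have h1 : |s*(2:ℝ)^m - (i:ℝ)| ≤ 1/2 := by
        rw [abs_sub_comm]
        exact hiround
      have h2 : |((2:ℝ)^m)⁻¹| = ((2:ℝ)^m)⁻¹ := abs_of_pos (by positivity)
      rw [h2]
      calc |s*(2:ℝ)^m - (i:ℝ)| * ((2:ℝ)^m)⁻¹ * |θ 1|
          ≤ (1/2) * ((2:ℝ)^m)⁻¹ * 1 := by
            apply mul_le_mul _ hθ1 (abs_nonneg _) (by positivity)
            apply mul_le_mul_of_nonneg_right h1 (by positivity)
        _ = ((2:ℝ)^m)⁻¹ / 2 := by ring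
    have hdrift : |((ℓ:ℝ)*del N) * (θ 0 - ((i:ℝ) * ((2:ℝ)^m)⁻¹) * θ 1)| ≤ del N / 2 := by
      rw [abs_mul]
      have hl : |(ℓ:ℝ)*del N| ≤ (2:ℝ)^m * del N := by
        rw [abs_of_nonneg (by
          apply mul_nonneg _ hδ.le
          exact_mod_cast hℓ.1)]
        apply mul_le_mul_of_nonneg_right _ hδ.le
        have : ((ℓ:ℤ):ℝ) ≤ (((2:ℤ)^m - 1 : ℤ):ℝ) := by exact_mod_cast hℓ.2
        push_cast at this
        linarith
      calc |(ℓ:ℝ)*del N| * |θ 0 - ((i:ℝ) * ((2:ℝ)^m)⁻¹) * θ 1|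
          ≤ ((2:ℝ)^m * del N) * (((2:ℝ)^m)⁻¹ / 2) := by
            apply mul_le_mul hl hslope (abs_nonneg _) (by positivity)
        _ = del N / 2 := by
            rw [show ((2:ℝ)^m * del N) * (((2:ℝ)^m)⁻¹ / 2)
                = (((2:ℝ)^m)⁻¹ * (2:ℝ)^m) * del N / 2 by ring, hσK]
            ring
    rw [proj_eq]
    have hkey : z 1 * θ 0 - z 0 * θ 1 - c0
        = (z 1 - (((i % Qz m N : ℤ):ℝ) * ((2:ℝ)^m * del N) + (ℓ:ℝ)*del N)) * θ 0
          - (z 0 - Yf m N i ℓ) * θ 1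
          + (((ℓ:ℝ)*del N) * (θ 0 - ((i:ℝ) * ((2:ℝ)^m)⁻¹) * θ 1)) := by
      rw [← hYexp]
      ring
    have habs : |z 1 * θ 0 - z 0 * θ 1 - c0| ≤ 3 * del N := by
      rw [hkey]
      have t1 : |(z 1 - (((i % Qz m N : ℤ):ℝ) * ((2:ℝ)^m * del N) + (ℓ:ℝ)*del N)) * θ 0| ≤ del N := by
        rw [abs_mul]
        calc _ ≤ del N * 1 := mul_le_mul hzX hθ0 (abs_nonneg _) hδ.le
          _ = del N := by ring
      have t2 : |(z 0 - Yf m N i ℓ) * θ 1| ≤ del N := by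
        rw [abs_mul]
        calc _ ≤ del N * 1 := mul_le_mul hzY hθ1 (abs_nonneg _) hδ.le
          _ = del N := by ring
      calc |_ + _| ≤ |(z 1 - (((i % Qz m N : ℤ):ℝ) * ((2:ℝ)^m * del N) + (ℓ:ℝ)*del N)) * θ 0
          - (z 0 - Yf m N i ℓ) * θ 1|
          + |((ℓ:ℝ)*del N) * (θ 0 - ((i:ℝ) * ((2:ℝ)^m)⁻¹) * θ 1)| := abs_add_le _ _
        _ ≤ (del N + del N) + del N / 2 := by
            refine add_le_add ?_ (le_trans hdrift (le_refl _))
            calc |_ - _| ≤ |(z 1 - (((i % Qz m N : ℤ):ℝ) * ((2:ℝ)^m * del N) + (ℓ:ℝ)*del N)) * θ 0|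
                + |(z 0 - Yf m N i ℓ) * θ 1| := abs_sub _ _
              _ ≤ del N + del N := add_le_add t1 t2
        _ ≤ 3 * del N := by linarith
    rw [abs_le] at habs
    exact ⟨by linarith [habs.1], by linarith [habs.2]⟩

lemma full_count (x₀ x₁ r : ℝ) (hr : 0 ≤ r) :
    (((Pfull N).filter (fun q : ℤ×ℤ =>
        |(q.1:ℝ)*del N - x₀| ≤ 2*r ∧ |(q.2:ℝ)*del N - x₁| ≤ 2*r)).card : ℝ)
      ≤ (4*r*(2:ℝ)^N + 1)^2 := by
  classical
  have hδ : 0 < del N := del_pos N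
  have hsub : ((Pfull N).filter (fun q : ℤ×ℤ =>
      |(q.1:ℝ)*del N - x₀| ≤ 2*r ∧ |(q.2:ℝ)*del N - x₁| ≤ 2*r))
      ⊆ ((Finset.Icc (0:ℤ) (2^N - 1)).filter (fun a : ℤ => |(a:ℝ) * del N - x₀| ≤ 2*r)) ×ˢ
        ((Finset.Icc (0:ℤ) (2^N - 1)).filter (fun b : ℤ => |(b:ℝ) * del N - x₁| ≤ 2*r)) := by
    intro p hp
    rw [Finset.mem_filter, Pfull, Finset.mem_product] at hp
    obtain ⟨⟨hp1, hp2⟩, hc1, hc2⟩ := hp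
    rw [Finset.mem_product, Finset.mem_filter, Finset.mem_filter]
    exact ⟨⟨hp1, hc1⟩, hp2, hc2⟩
  refine le_trans (Nat.cast_le.mpr (Finset.card_le_card hsub)) ?_
  rw [Finset.card_product]
  push_cast
  have hb : ∀ x : ℝ, (((Finset.Icc (0:ℤ) (2^N - 1)).filter
      (fun a : ℤ => |(a:ℝ) * del N - x| ≤ 2*r)).card : ℝ) ≤ 4*r*(2:ℝ)^N + 1 := by
    intro x
    have := count_affine ((Finset.Icc (0:ℤ) (2^N - 1)).filter
        (fun a : ℤ => |(a:ℝ) * del N - x| ≤ 2*r)) (del N) 0 (x - 2*r) (x + 2*r)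
        hδ (by linarith) ?_
    · refine this.trans ?_
      rw [show (x + 2*r - (x - 2*r)) = 4*r by ring, div_del]
    · intro j hj
      rw [Finset.mem_filter] at hj
      have := hj.2
      rw [abs_le] at this
      constructor <;> linarith [this.1, this.2]
  have h1 := hb x₀
  have h2 := hb x₁
  have hpos : (0:ℝ) ≤ 4*r*(2:ℝ)^N + 1 := by positivity
  rw [sq]
  exact mul_le_mul h1 h2 (Nat.cast_nonneg _) hpos

lemma arith_full {t r : ℝ} (h1 : 1 ≤ t) (h2 : t < 2) (hbig : (N:ℝ)*(2 - t) ≤ 8)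
    (hr1 : del N ≤ r) (hr2 : r ≤ 1) :
    (4*r*(2:ℝ)^N + 1)^2 ≤ 6400 * (r / del N)^t := by
  have hδ : 0 < del N := del_pos N
  have hr0 : 0 < r := lt_of_lt_of_le hδ hr1
  have h2N : (0:ℝ) < (2:ℝ)^N := by positivity
  have hρeq : r / del N = r * (2:ℝ)^N := div_del r
  have hρ1 : 1 ≤ r * (2:ℝ)^N := by
    rw [← hρeq, le_div_iff₀ hδ]; linarith
  have hρ0 : 0 < r * (2:ℝ)^N := by positivity
  have hρN : r * (2:ℝ)^N ≤ (2:ℝ)^N := by nlinarith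
  have key : (r * (2:ℝ)^N)^(2:ℕ) ≤ 256 * (r * (2:ℝ)^N)^t := by
    have e1 : ((r * (2:ℝ)^N) : ℝ)^(2:ℕ) = (r * (2:ℝ)^N)^((2:ℕ):ℝ) := by
      rw [Real.rpow_natCast]
    have e2 : (r * (2:ℝ)^N)^((2:ℕ):ℝ) = (r * (2:ℝ)^N)^t * (r * (2:ℝ)^N)^(2 - t) := by
      rw [← Real.rpow_add hρ0]
      norm_num
    have e3 : (r * (2:ℝ)^N)^(2 - t) ≤ ((2:ℝ)^N)^(2 - t) := by
      apply Real.rpow_le_rpow hρ0.le hρN (by linarith)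
    have e4 : ((2:ℝ)^N)^(2 - t) ≤ 256 := by
      have : ((2:ℝ)^N)^(2 - t) = (2:ℝ)^((N:ℝ)*(2 - t)) := by
        rw [← Real.rpow_natCast 2 N, ← Real.rpow_mul (by norm_num)]
      rw [this]
      calc (2:ℝ)^((N:ℝ)*(2 - t)) ≤ (2:ℝ)^((8:ℕ):ℝ) := by
            apply Real.rpow_le_rpow_of_exponent_le (by norm_num)
            push_cast
            linarith
        _ = 256 := by
            rw [Real.rpow_natCast]
            norm_num
    have e5 : (0:ℝ) ≤ (r * (2:ℝ)^N)^t := by positivity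
    calc ((r * (2:ℝ)^N) : ℝ)^(2:ℕ) = (r * (2:ℝ)^N)^t * (r * (2:ℝ)^N)^(2 - t) := by rw [e1, e2]
      _ ≤ (r * (2:ℝ)^N)^t * 256 := by
          apply mul_le_mul_of_nonneg_left (le_trans e3 e4) e5
      _ = 256 * (r * (2:ℝ)^N)^t := by ring
  have expand : (4*r*(2:ℝ)^N + 1)^2 ≤ 25 * (r * (2:ℝ)^N)^(2:ℕ) := by nlinarith
  rw [hρeq]
  nlinarith [key, Real.rpow_nonneg hρ0.le t]

lemma Pfull_subset_unit : ∀ q ∈ Pfull N, dsq (del N) q.1 q.2 ⊆ unitSq := by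
  intro q hq
  rw [Pfull, Finset.mem_product, Finset.mem_Icc, Finset.mem_Icc] at hq
  exact dsq_subset_unit hq.1.1 (by omega) hq.2.1 (by omega)

lemma Pfull_card : ((2:ℝ)^N * (2:ℝ)^N) ≤ ((Pfull N).card : ℝ) := by
  rw [Pfull, Finset.card_product, Int.card_Icc]
  have h2m : ((2:ℤ)^N - 1 + 1 - 0) = ((2^N : ℕ) : ℤ) := by push_cast; ring
  rw [h2m, Int.toNat_natCast]
  push_cast
  exact le_refl _

lemma floor_pt_bounds {v : ℝ} (h0 : 0 ≤ v) (h1 : v ≤ (2:ℝ)^N - 1) :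
    0 ≤ ⌊v⌋ ∧ ⌊v⌋ ≤ (2:ℤ)^N - 1 := by
  constructor
  · exact Int.floor_nonneg.mpr h0
  · have : (⌊v⌋:ℝ) ≤ (2:ℝ)^N - 1 := le_trans (Int.floor_le v) h1
    have h2 : (⌊v⌋:ℝ) ≤ (((2:ℤ)^N - 1 : ℤ):ℝ) := by push_cast; linarith
    exact_mod_cast h2

set_option maxHeartbeats 4000000 in
lemma tube_full (θ : EuclideanSpace ℝ (Fin 2)) (hθ : ‖θ‖ = 1) :
    ∃ (α β : ℝ) (S : Finset (ℤ×ℤ)), S ⊆ Pfull N ∧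
      β - α ≤ 6 * del N ∧
      ((2:ℝ)^N ≤ (S.card : ℝ)) ∧
      ∀ q ∈ S, ∀ z ∈ dsq (del N) q.1 q.2, proj θ z ∈ Set.Icc α β := by
  classical
  have hδ : 0 < del N := del_pos N
  obtain ⟨hθ0, hθ1⟩ := theta_abs_le hθ
  have h2N1 : (1:ℝ) ≤ (2:ℝ)^N := one_le_pow₀ (by norm_num)
  rcases le_or_gt (|θ 1|) (|θ 0|) with hc | hc
  · -- shallow
    have hθ0ne : θ 0 ≠ 0 := by
      intro h0
      have h := theta_norm hθ
      rw [h0] at h hc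
      simp only [abs_zero] at hc
      have : θ 1 = 0 := abs_eq_zero.mp (le_antisymm hc (abs_nonneg _))
      rw [this] at h
      norm_num at h
    set s : ℝ := θ 1 / θ 0 with hsdef
    have hθ1s : θ 1 = s * θ 0 := by rw [hsdef]; field_simp
    have hs : |s| ≤ 1 := by
      rw [hsdef, abs_div, div_le_one (abs_pos.mpr hθ0ne)]; exact hc
    set hh : ℝ := if 0 ≤ s then (0:ℝ) else (2:ℝ)^N - 1 with hhdef
    have hval : ∀ ℓ : ℤ, 0 ≤ ℓ → ℓ ≤ (2:ℤ)^N - 1 →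
        0 ≤ s*(ℓ:ℝ) + hh ∧ s*(ℓ:ℝ) + hh ≤ (2:ℝ)^N - 1 := by
      intro ℓ h0 h1
      have hl0 : (0:ℝ) ≤ (ℓ:ℝ) := by exact_mod_cast h0
      have hl1 : (ℓ:ℝ) ≤ (2:ℝ)^N - 1 := by
        have : ((ℓ:ℤ):ℝ) ≤ (((2:ℤ)^N - 1 : ℤ):ℝ) := by exact_mod_cast h1
        push_cast at this; linarith
      rw [hhdef]
      rw [abs_le] at hs
      split_ifs with hsgn
      · constructor <;> nlinarith
      · push_neg at hsgn
        constructor <;> nlinarith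
    set S : Finset (ℤ×ℤ) := (Finset.Icc (0:ℤ) (2^N - 1)).image
        (fun ℓ => (ℓ, ⌊s*(ℓ:ℝ) + hh⌋)) with hSdef
    have hSsub : S ⊆ Pfull N := by
      intro q hq
      rw [hSdef, Finset.mem_image] at hq
      obtain ⟨ℓ, hℓ, rfl⟩ := hq
      rw [Finset.mem_Icc] at hℓ
      obtain ⟨hv0, hv1⟩ := hval ℓ hℓ.1 hℓ.2
      obtain ⟨hf0, hf1⟩ := floor_pt_bounds (N := N) hv0 hv1
      rw [Pfull, Finset.mem_product, Finset.mem_Icc, Finset.mem_Icc]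
      exact ⟨⟨hℓ.1, hℓ.2⟩, hf0, hf1⟩
    have hScard : ((2:ℝ)^N ≤ (S.card : ℝ)) := by
      have hcc : S.card = 2^N := by
        rw [hSdef, Finset.card_image_of_injOn]
        · rw [Int.card_Icc]
          have h2m : ((2:ℤ)^N - 1 + 1 - 0) = ((2^N : ℕ) : ℤ) := by push_cast; ring
          rw [h2m, Int.toNat_natCast]
        · intro a _ b _ hab
          exact congrArg (·.1) hab
      rw [hcc]; push_cast; exact le_refl _
    set c0 : ℝ := hh * del N * θ 0 with hc0
    refine ⟨c0 - 3*del N, c0 + 3*del N, S, hSsub, by linarith, hScard, ?_⟩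
    intro q hq z hz
    rw [hSdef, Finset.mem_image] at hq
    obtain ⟨ℓ, hℓ, rfl⟩ := hq
    rw [Finset.mem_Icc] at hℓ
    obtain ⟨⟨hzx0, hzx1⟩, hzy0, hzy1⟩ := hz
    simp only at hzx0 hzx1 hzy0 hzy1
    have hzX : |z 0 - (ℓ:ℝ)*del N| ≤ del N := by
      push_cast at hzx1
      rw [abs_le]; constructor <;> nlinarith
    have hzY : |z 1 - (s*(ℓ:ℝ) + hh)*del N| ≤ del N := by
      have hfl := Int.floor_le (s*(ℓ:ℝ) + hh)
      have hfu := Int.lt_floor_add_one (s*(ℓ:ℝ) + hh)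
      push_cast at hzy1
      rw [abs_le]
      constructor <;> nlinarith [mul_le_mul_of_nonneg_right hfl hδ.le,
        mul_le_mul_of_nonneg_right hfu.le hδ.le]
    rw [proj_eq]
    have hkey : z 1 * θ 0 - z 0 * θ 1 - c0
        = (z 1 - (s*(ℓ:ℝ) + hh)*del N) * θ 0 - (z 0 - (ℓ:ℝ)*del N) * θ 1 := by
      rw [hc0, hθ1s]
      ring
    have habs : |z 1 * θ 0 - z 0 * θ 1 - c0| ≤ 3 * del N := by
      rw [hkey]
      have t1 : |(z 1 - (s*(ℓ:ℝ) + hh)*del N) * θ 0| ≤ del N := by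
        rw [abs_mul]
        calc _ ≤ del N * 1 := mul_le_mul hzY hθ0 (abs_nonneg _) hδ.le
          _ = del N := by ring
      have t2 : |(z 0 - (ℓ:ℝ)*del N) * θ 1| ≤ del N := by
        rw [abs_mul]
        calc _ ≤ del N * 1 := mul_le_mul hzX hθ1 (abs_nonneg _) hδ.le
          _ = del N := by ring
      calc |_ - _| ≤ |(z 1 - (s*(ℓ:ℝ) + hh)*del N) * θ 0| + |(z 0 - (ℓ:ℝ)*del N) * θ 1| :=
            abs_sub _ _
        _ ≤ del N + del N := add_le_add t1 t2
        _ ≤ 3 * del N := by linarith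
    rw [abs_le] at habs
    exact ⟨by linarith [habs.1], by linarith [habs.2]⟩
  · -- steep
    have hθ1ne : θ 1 ≠ 0 := by
      intro h0
      rw [h0] at hc
      simp only [abs_zero] at hc
      exact absurd hc (not_lt.mpr (abs_nonneg _))
    set s : ℝ := θ 0 / θ 1 with hsdef
    have hθ0s : θ 0 = s * θ 1 := by rw [hsdef]; field_simp
    have hs : |s| ≤ 1 := by
      rw [hsdef, abs_div, div_le_one (abs_pos.mpr hθ1ne)]; exact hc.le
    set hh : ℝ := if 0 ≤ s then (0:ℝ) else (2:ℝ)^N - 1 with hhdef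
    have hval : ∀ ℓ : ℤ, 0 ≤ ℓ → ℓ ≤ (2:ℤ)^N - 1 →
        0 ≤ s*(ℓ:ℝ) + hh ∧ s*(ℓ:ℝ) + hh ≤ (2:ℝ)^N - 1 := by
      intro ℓ h0 h1
      have hl0 : (0:ℝ) ≤ (ℓ:ℝ) := by exact_mod_cast h0
      have hl1 : (ℓ:ℝ) ≤ (2:ℝ)^N - 1 := by
        have : ((ℓ:ℤ):ℝ) ≤ (((2:ℤ)^N - 1 : ℤ):ℝ) := by exact_mod_cast h1
        push_cast at this; linarith
      rw [hhdef]
      rw [abs_le] at hs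
      split_ifs with hsgn
      · constructor <;> nlinarith
      · push_neg at hsgn
        constructor <;> nlinarith
    set S : Finset (ℤ×ℤ) := (Finset.Icc (0:ℤ) (2^N - 1)).image
        (fun ℓ : ℤ => (⌊s*(ℓ:ℝ) + hh⌋, ℓ)) with hSdef
    have hSsub : S ⊆ Pfull N := by
      intro q hq
      rw [hSdef, Finset.mem_image] at hq
      obtain ⟨ℓ, hℓ, rfl⟩ := hq
      rw [Finset.mem_Icc] at hℓ
      obtain ⟨hv0, hv1⟩ := hval ℓ hℓ.1 hℓ.2
      obtain ⟨hf0, hf1⟩ := floor_pt_bounds (N := N) hv0 hv1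
      rw [Pfull, Finset.mem_product, Finset.mem_Icc, Finset.mem_Icc]
      exact ⟨⟨hf0, hf1⟩, hℓ.1, hℓ.2⟩
    have hScard : ((2:ℝ)^N ≤ (S.card : ℝ)) := by
      have hcc : S.card = 2^N := by
        rw [hSdef, Finset.card_image_of_injOn]
        · rw [Int.card_Icc]
          have h2m : ((2:ℤ)^N - 1 + 1 - 0) = ((2^N : ℕ) : ℤ) := by push_cast; ring
          rw [h2m, Int.toNat_natCast]
        · intro a _ b _ hab
          exact congrArg (·.2) hab
      rw [hcc]; push_cast; exact le_refl _
    set c0 : ℝ := -(hh * del N * θ 1) with hc0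
    refine ⟨c0 - 3*del N, c0 + 3*del N, S, hSsub, by linarith, hScard, ?_⟩
    intro q hq z hz
    rw [hSdef, Finset.mem_image] at hq
    obtain ⟨ℓ, hℓ, rfl⟩ := hq
    rw [Finset.mem_Icc] at hℓ
    obtain ⟨⟨hzx0, hzx1⟩, hzy0, hzy1⟩ := hz
    simp only at hzx0 hzx1 hzy0 hzy1
    have hzY : |z 1 - (ℓ:ℝ)*del N| ≤ del N := by
      push_cast at hzy1
      rw [abs_le]; constructor <;> nlinarith
    have hzX : |z 0 - (s*(ℓ:ℝ) + hh)*del N| ≤ del N := by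
      have hfl := Int.floor_le (s*(ℓ:ℝ) + hh)
      have hfu := Int.lt_floor_add_one (s*(ℓ:ℝ) + hh)
      push_cast at hzx1
      rw [abs_le]
      constructor <;> nlinarith [mul_le_mul_of_nonneg_right hfl hδ.le,
        mul_le_mul_of_nonneg_right hfu.le hδ.le]
    rw [proj_eq]
    have hkey : z 1 * θ 0 - z 0 * θ 1 - c0
        = (z 1 - (ℓ:ℝ)*del N) * θ 0 - (z 0 - (s*(ℓ:ℝ) + hh)*del N) * θ 1 := by
      rw [hc0, hθ0s]
      ring
    have habs : |z 1 * θ 0 - z 0 * θ 1 - c0| ≤ 3 * del N := by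
      rw [hkey]
      have t1 : |(z 1 - (ℓ:ℝ)*del N) * θ 0| ≤ del N := by
        rw [abs_mul]
        calc _ ≤ del N * 1 := mul_le_mul hzY hθ0 (abs_nonneg _) hδ.le
          _ = del N := by ring
      have t2 : |(z 0 - (s*(ℓ:ℝ) + hh)*del N) * θ 1| ≤ del N := by
        rw [abs_mul]
        calc _ ≤ del N * 1 := mul_le_mul hzX hθ1 (abs_nonneg _) hδ.le
          _ = del N := by ring
      calc |_ - _| ≤ |(z 1 - (ℓ:ℝ)*del N) * θ 0| + |(z 0 - (s*(ℓ:ℝ) + hh)*del N) * θ 1| :=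
            abs_sub _ _
        _ ≤ del N + del N := add_le_add t1 t2
        _ ≤ 3 * del N := by linarith
    rw [abs_le] at habs
    exact ⟨by linarith [habs.1], by linarith [habs.2]⟩

lemma del_eq : (2:ℝ)^(-(N:ℝ)) = del N := by
  rw [Real.rpow_neg (by norm_num), Real.rpow_natCast]
  rfl

lemma rpow_negt {t : ℝ} : ((2:ℝ)^(-(N:ℝ)))^(-t) = (2:ℝ)^((N:ℝ)*t) := by
  rw [← Real.rpow_mul (by norm_num : (0:ℝ) ≤ 2)]
  congr 1
  ring

lemma pow2_rpow_le {x : ℝ} {k : ℕ} (h : x ≤ (k:ℝ)) : (2:ℝ)^x ≤ (2:ℝ)^k := by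
  rw [← Real.rpow_natCast 2 k]
  exact Real.rpow_le_rpow_of_exponent_le (by norm_num) h

end main

set_option maxHeartbeats 4000000 in
theorem result :
    ∃ c C : ℝ, 0 < c ∧ 0 < C ∧
    ∀ (t : ℝ), t ∈ Set.Ico (1:ℝ) 2 → ∀ (N : ℕ),
    ∃ P : Finset (ℤ × ℤ),
      (∀ q ∈ P, dsq ((2:ℝ)^(-(N:ℝ))) q.1 q.2 ⊆ unitSq) ∧
      c * ((2:ℝ)^(-(N:ℝ)))^(-t) ≤ P.card ∧
      (∀ (x : EuclideanSpace ℝ (Fin 2)) (r : ℝ), (2:ℝ)^(-(N:ℝ)) ≤ r → r ≤ 1 →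
        ({q : ℤ × ℤ | q ∈ P ∧
            (dsq ((2:ℝ)^(-(N:ℝ))) q.1 q.2 ∩ Metric.closedBall x r).Nonempty}.ncard : ℝ)
          ≤ C * (r / (2:ℝ)^(-(N:ℝ)))^t) ∧
      (∀ θ : EuclideanSpace ℝ (Fin 2), ‖θ‖ = 1 →
        ∃ (α β : ℝ) (S : Finset (ℤ × ℤ)), S ⊆ P ∧
          β - α ≤ C * (2:ℝ)^(-(N:ℝ)) ∧
          c * ((2:ℝ)^(-(N:ℝ)))^(-t/2) ≤ S.card ∧
          ∀ q ∈ S, ∀ z ∈ dsq ((2:ℝ)^(-(N:ℝ))) q.1 q.2, proj θ z ∈ Set.Icc α β) := by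
  classical
  refine ⟨1, 100000, one_pos, by norm_num, ?_⟩
  rintro t ⟨ht1, ht2⟩ N
  rw [del_eq (N := N)]
  have hδ : 0 < del N := del_pos N
  have hNt0 : (0:ℝ) ≤ (N:ℝ)*t/2 := by positivity
  set m : ℕ := ⌈(N:ℝ)*t/2⌉₊ with hmdef
  have hml : (N:ℝ)*t/2 ≤ (m:ℝ) := Nat.le_ceil _
  have hmh : (m:ℝ) ≤ (N:ℝ)*t/2 + 1 := by
    have := Nat.ceil_lt_add_one hNt0
    exact this.le
  have hm2 : N ≤ 2*m := by
    have hreal : (N:ℝ) ≤ 2*(m:ℝ) := by nlinarith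
    exact_mod_cast hreal
  have hmn : m ≤ N := by
    rw [hmdef]
    apply Nat.ceil_le.mpr
    push_cast
    nlinarith [Nat.cast_nonneg (α := ℝ) N]
  -- common rpow facts
  have hcardKey : (2:ℝ)^((N:ℝ)*t) = (2:ℝ)^((N:ℝ)*t/2) * (2:ℝ)^((N:ℝ)*t/2) := by
    rw [← Real.rpow_add (by norm_num)]
    congr 1
    ring
  have hnegt : (del N)^(-t) = (2:ℝ)^((N:ℝ)*t) := by
    rw [← del_eq (N := N)]
    exact rpow_negt
  have hhalf : (del N)^(-t/2) = (2:ℝ)^((N:ℝ)*t/2) := by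
    rw [← del_eq (N := N), show (-t/2) = -(t/2) by ring, rpow_negt]
    congr 1
    ring
  by_cases hbr : m + 4 ≤ N
  · -- MAIN BRANCH
    refine ⟨PP m N, PP_subset_unit hm2 hbr, ?_, ?_, ?_⟩
    · -- cardinality
      rw [hnegt, one_mul, hcardKey]
      calc (2:ℝ)^((N:ℝ)*t/2) * (2:ℝ)^((N:ℝ)*t/2)
          ≤ (2:ℝ)^m * (2:ℝ)^m := by
            apply mul_le_mul (pow2_rpow_le hml) (pow2_rpow_le hml)
              (by positivity) (by positivity)
        _ ≤ ((PP m N).card : ℝ) := PP_card_ge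
    · -- non-concentration
      intro x r hr1 hr2
      have hr0 : 0 < r := lt_of_lt_of_le hδ hr1
      refine le_trans (ncard_le_filter (PP m N) hδ hr1 x) ?_
      have hsplit : ((PP m N).filter (fun q : ℤ×ℤ =>
          |(q.1:ℝ)*del N - x 0| ≤ 2*r ∧ |(q.2:ℝ)*del N - x 1| ≤ 2*r)).card
          ≤ ((P1 m N).filter (fun q : ℤ×ℤ =>
              |(q.1:ℝ)*del N - x 0| ≤ 2*r ∧ |(q.2:ℝ)*del N - x 1| ≤ 2*r)).card
          + ((P2 m N).filter (fun q : ℤ×ℤ =>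
              |(q.1:ℝ)*del N - x 0| ≤ 2*r ∧ |(q.2:ℝ)*del N - x 1| ≤ 2*r)).card
          + (((P2 m N).image Prod.swap).filter (fun q : ℤ×ℤ =>
              |(q.1:ℝ)*del N - x 0| ≤ 2*r ∧ |(q.2:ℝ)*del N - x 1| ≤ 2*r)).card := by
        rw [PP, Finset.filter_union, Finset.filter_union]
        refine le_trans (Finset.card_union_le _ _) ?_
        have := Finset.card_union_le
          ((P1 m N).filter (fun q : ℤ×ℤ =>
              |(q.1:ℝ)*del N - x 0| ≤ 2*r ∧ |(q.2:ℝ)*del N - x 1| ≤ 2*r))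
          ((P2 m N).filter (fun q : ℤ×ℤ =>
              |(q.1:ℝ)*del N - x 0| ≤ 2*r ∧ |(q.2:ℝ)*del N - x 1| ≤ 2*r))
        omega
      have h3 : (((P2 m N).image Prod.swap).filter (fun q : ℤ×ℤ =>
              |(q.1:ℝ)*del N - x 0| ≤ 2*r ∧ |(q.2:ℝ)*del N - x 1| ≤ 2*r)).card
          ≤ ((P2 m N).filter (fun q : ℤ×ℤ =>
              |(q.1:ℝ)*del N - x 1| ≤ 2*r ∧ |(q.2:ℝ)*del N - x 0| ≤ 2*r)).card := by
        rw [Finset.filter_image]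
        refine le_trans Finset.card_image_le ?_
        apply Finset.card_le_card
        intro q hq
        rw [Finset.mem_filter] at hq ⊢
        obtain ⟨hqm, hc1, hc2⟩ := hq
        simp only [Prod.fst_swap, Prod.snd_swap] at hc1 hc2
        exact ⟨hqm, hc2, hc1⟩
      have b1 := P1_count (m := m) (N := N) hmn (x 0) (x 1) r hr0.le
      have b2 := P2_count hm2 hbr (x 0) (x 1) r hr1
      have b3 := P2_count hm2 hbr (x 1) (x 0) r hr1
      have harith := arith_main (m := m) (N := N) ht1 ht2 hml hmh hm2 hmn hr1 hr2
      have hcast : (((PP m N).filter (fun q : ℤ×ℤ =>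
          |(q.1:ℝ)*del N - x 0| ≤ 2*r ∧ |(q.2:ℝ)*del N - x 1| ≤ 2*r)).card : ℝ)
          ≤ (4*r*(2:ℝ)^m + 1)^2 +
            2*((4*r*(2:ℝ)^(N-m) + 3) * (min (4*r*(2:ℝ)^N + 1) ((2:ℝ)^m)) * (96*(2:ℝ)^(2*m-N)*r + 1)) := by
        have hs' : (((PP m N).filter (fun q : ℤ×ℤ =>
            |(q.1:ℝ)*del N - x 0| ≤ 2*r ∧ |(q.2:ℝ)*del N - x 1| ≤ 2*r)).card : ℝ)
            ≤ (((P1 m N).filter (fun q : ℤ×ℤ =>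
                |(q.1:ℝ)*del N - x 0| ≤ 2*r ∧ |(q.2:ℝ)*del N - x 1| ≤ 2*r)).card : ℝ)
            + (((P2 m N).filter (fun q : ℤ×ℤ =>
                |(q.1:ℝ)*del N - x 0| ≤ 2*r ∧ |(q.2:ℝ)*del N - x 1| ≤ 2*r)).card : ℝ)
            + (((P2 m N).filter (fun q : ℤ×ℤ =>
                |(q.1:ℝ)*del N - x 1| ≤ 2*r ∧ |(q.2:ℝ)*del N - x 0| ≤ 2*r)).card : ℝ) := by
          exact_mod_cast le_trans hsplit (Nat.add_le_add (le_refl _) h3)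
        linarith [b1, b2, b3, hs']
      calc _ ≤ _ := hcast
        _ ≤ 30000 * (r / del N)^t := harith
        _ ≤ 100000 * (r / del N)^t := by
            have : (0:ℝ) ≤ (r / del N)^t := by positivity
            nlinarith
    · -- tube
      intro θ hθ
      obtain ⟨α, β, S, hS1, hS2, hS3, hS4⟩ := tube_main hm2 hbr θ hθ
      refine ⟨α, β, S, hS1, ?_, ?_, hS4⟩
      · calc β - α ≤ 6 * del N := hS2
          _ ≤ 100000 * del N := by nlinarith
      · rw [hhalf, one_mul]
        exact le_trans (pow2_rpow_le hml) hS3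
  · -- FULL BRANCH
    push_neg at hbr
    have hbig : (N:ℝ)*(2 - t) ≤ 8 := by
      have h1 : (N:ℝ) - 3 ≤ (m:ℝ) := by
        have : N ≤ m + 3 := by omega
        have := (Nat.cast_le (α := ℝ)).mpr this
        push_cast at this
        linarith
      nlinarith
    refine ⟨Pfull N, Pfull_subset_unit, ?_, ?_, ?_⟩
    · rw [hnegt, one_mul]
      calc (2:ℝ)^((N:ℝ)*t) ≤ (2:ℝ)^((N:ℝ)*2) := by
            apply Real.rpow_le_rpow_of_exponent_le (by norm_num)
            nlinarith
        _ = (2:ℝ)^N * (2:ℝ)^N := by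
            rw [show (N:ℝ)*2 = (N:ℝ) + (N:ℝ) by ring, Real.rpow_add (by norm_num),
              Real.rpow_natCast]
        _ ≤ ((Pfull N).card : ℝ) := Pfull_card
    · intro x r hr1 hr2
      have hr0 : 0 < r := lt_of_lt_of_le hδ hr1
      refine le_trans (ncard_le_filter (Pfull N) hδ hr1 x) ?_
      calc _ ≤ (4*r*(2:ℝ)^N + 1)^2 := full_count (x 0) (x 1) r hr0.le
        _ ≤ 6400 * (r / del N)^t := arith_full ht1 ht2 hbig hr1 hr2
        _ ≤ 100000 * (r / del N)^t := by
            have : (0:ℝ) ≤ (r / del N)^t := by positivity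
            nlinarith
    · intro θ hθ
      obtain ⟨α, β, S, hS1, hS2, hS3, hS4⟩ := tube_full θ hθ
      refine ⟨α, β, S, hS1, ?_, ?_, hS4⟩
      · calc β - α ≤ 6 * del N := hS2
          _ ≤ 100000 * del N := by nlinarith
      · rw [hhalf, one_mul]
        refine le_trans ?_ hS3
        apply pow2_rpow_le
        nlinarith
end S4

theorem stmt_4 :
    ∃ c C : ℝ, 0 < c ∧ 0 < C ∧
    ∀ (t : ℝ), t ∈ Set.Ico (1:ℝ) 2 → ∀ (N : ℕ),
    ∃ P : Finset (ℤ × ℤ),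
      (∀ q ∈ P, dsq ((2:ℝ)^(-(N:ℝ))) q.1 q.2 ⊆ unitSq) ∧
      c * ((2:ℝ)^(-(N:ℝ)))^(-t) ≤ P.card ∧
      (∀ (x : EuclideanSpace ℝ (Fin 2)) (r : ℝ), (2:ℝ)^(-(N:ℝ)) ≤ r → r ≤ 1 →
        ({q : ℤ × ℤ | q ∈ P ∧
            (dsq ((2:ℝ)^(-(N:ℝ))) q.1 q.2 ∩ Metric.closedBall x r).Nonempty}.ncard : ℝ)
          ≤ C * (r / (2:ℝ)^(-(N:ℝ)))^t) ∧
      (∀ θ : EuclideanSpace ℝ (Fin 2), ‖θ‖ = 1 →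
        ∃ (α β : ℝ) (S : Finset (ℤ × ℤ)), S ⊆ P ∧
          β - α ≤ C * (2:ℝ)^(-(N:ℝ)) ∧
          c * ((2:ℝ)^(-(N:ℝ)))^(-t/2) ≤ S.card ∧
          ∀ q ∈ S, ∀ z ∈ dsq ((2:ℝ)^(-(N:ℝ))) q.1 q.2, proj θ z ∈ Set.Icc α β) :=
  S4.result
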